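/- arXiv:2202.08747 — 4 statements merged into one kernel-verified Lean document; each statement's English description precedes it below -/
import Mathlib

section
/- Let a, b be coprime positive odd integers and F = {{0, a}, {0, b}}. Then π(F) = 1/2, witnessed by the pattern X = 2ℤ of even integers, which hits both ships. -/
open Filter

/-- A shooting pattern `X` hits a ship `S` if every translate of `S` intersects `X`. -/
def Hits (X S : Set ℤ) : Prop := ∀ n : ℤ, ∃ s ∈ S, n + s ∈ X

/-- Lower asymptotic density of a set of integers. -/
noncomputable def lowerDensity (X : Set ℤ) : ℝ :=
  Filter.liminf (fun N : ℕ =>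
    ((X ∩ Set.Icc (-(N:ℤ)) (N:ℤ)).ncard : ℝ) / (2 * N + 1)) Filter.atTop

/-- Optimal piercing density of a family of ships. -/
noncomputable def piercing (F : Set (Set ℤ)) : ℝ :=
  sInf (lowerDensity '' {X | ∀ S ∈ F, Hits X S})

lemma tendsto_aux (c : ℝ) :
    Tendsto (fun N : ℕ => ((N : ℝ) + c) / (2 * N + 1)) atTop (nhds (1/2)) := by
  have h : Tendsto (fun N : ℕ => (2 * (N:ℝ) + 1)) atTop atTop := by
    apply tendsto_atTop_add_const_right
    exact (tendsto_natCast_atTop_atTop).const_mul_atTop (by norm_num)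
  have h0 : Tendsto (fun N : ℕ => (2 * (N:ℝ) + 1)⁻¹) atTop (nhds 0) :=
    tendsto_inv_atTop_zero.comp h
  have heq : ∀ N : ℕ, ((N : ℝ) + c) / (2 * N + 1)
      = 1/2 + (c - 1/2) * (2 * (N:ℝ) + 1)⁻¹ := by
    intro N
    have hne : (2 * (N:ℝ) + 1) ≠ 0 := by positivity
    field_simp
    ring
  simp only [heq]
  have := ((h0.const_mul (c - 1/2)).const_add (1/2 : ℝ))
  simpa using this

lemma hits_evens (c : ℤ) (hc : Odd c) : Hits {n : ℤ | Even n} {0, c} := by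
  intro n
  rcases Int.even_or_odd n with h | h
  · exact ⟨0, by simp, by simpa using h⟩
  · exact ⟨c, by simp, by simpa using h.add_odd hc⟩

lemma ncard_Icc_int (u v : ℤ) : (Set.Icc u v).ncard = (v + 1 - u).toNat := by
  rw [← Finset.coe_Icc, Set.ncard_coe_finset, Int.card_Icc]

lemma evens_count (N : ℕ) :
    ({n : ℤ | Even n} ∩ Set.Icc (-(N:ℤ)) (N:ℤ)).ncard = 2 * (N / 2) + 1 := by
  have hM : 2 * ((N / 2 : ℕ) : ℤ) ≤ (N:ℤ) ∧ (N:ℤ) ≤ 2 * ((N / 2 : ℕ) : ℤ) + 1 := by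
    omega
  set M : ℤ := ((N / 2 : ℕ) : ℤ) with hMdef
  have himg : {n : ℤ | Even n} ∩ Set.Icc (-(N:ℤ)) (N:ℤ)
      = (fun k : ℤ => 2 * k) '' Set.Icc (-M) M := by
    ext n
    simp only [Set.mem_inter_iff, Set.mem_setOf_eq, Set.mem_Icc, Set.mem_image]
    constructor
    · rintro ⟨⟨k, hk⟩, h1, h2⟩
      exact ⟨k, by omega, by omega⟩
    · rintro ⟨k, hk, rfl⟩
      exact ⟨⟨k, by ring⟩, by omega, by omega⟩
  rw [himg, Set.ncard_image_of_injective _ (mul_right_injective₀ (by norm_num)),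
    ncard_Icc_int]
  omega

lemma evens_density : lowerDensity {n : ℤ | Even n} = 1 / 2 := by
  have hT : Tendsto (fun N : ℕ =>
      ((({n : ℤ | Even n} ∩ Set.Icc (-(N:ℤ)) (N:ℤ)).ncard : ℝ)) / (2 * N + 1))
      atTop (nhds (1/2)) := by
    apply tendsto_of_tendsto_of_tendsto_of_le_of_le (tendsto_aux 0) (tendsto_aux 1)
    · intro N
      simp only [evens_count]
      gcongr
      have h : (N:ℕ) ≤ 2*(N/2)+1 := by omega
      have h' : ((N:ℕ):ℝ) ≤ ((2*(N/2)+1 : ℕ):ℝ) := Nat.cast_le.mpr h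
      push_cast at h' ⊢
      linarith
    · intro N
      simp only [evens_count]
      gcongr
      have h : 2*(N/2)+1 ≤ (N:ℕ)+1 := by omega
      have h' : ((2*(N/2)+1 : ℕ):ℝ) ≤ ((N+1 : ℕ):ℝ) := Nat.cast_le.mpr h
      push_cast at h' ⊢
      linarith
  exact hT.liminf_eq

lemma block_bound (a b : ℤ) (ha : 0 < a) (hb : 0 < b) (hcop : IsCoprime a b)
    (M : ℤ) (hM : a + b = 2 * M)
    (X : Set ℤ) (hA : Hits X {0, a}) (hB : Hits X {0, b}) (t : ℤ) :
    M.toNat ≤ (X ∩ Set.Icc t (t + (a + b) - 1)).ncard := by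
  set m : ℤ := a + b with hm
  have hm0 : 0 < m := by omega
  set e : ℤ → ℤ := fun j => t + (j * a) % m with he
  have h_mem : ∀ j, e j ∈ Set.Icc t (t + m - 1) := by
    intro j
    have h1 := Int.emod_nonneg (j * a) hm0.ne'
    have h2 := Int.emod_lt_of_pos (j * a) hm0
    simp only [he, Set.mem_Icc]
    omega
  have h_step : ∀ j : ℤ, e (j + 1) = e j + a ∨ e (j + 1) = e j - b := by
    intro j
    have hr1 := Int.emod_nonneg (j * a) hm0.ne'
    have hr2 := Int.emod_lt_of_pos (j * a) hm0
    have hkey : ((j + 1) * a) % m = ((j * a) % m + a) % m := by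
      rw [add_mul, one_mul, Int.add_emod, Int.emod_eq_of_lt ha.le (by omega : a < m),
        Int.add_emod (j * a % m), Int.emod_emod_of_dvd _ dvd_rfl,
        Int.emod_eq_of_lt ha.le (by omega : a < m)]
    by_cases hlt : (j * a) % m + a < m
    · left
      have : ((j * a) % m + a) % m = (j * a) % m + a :=
        Int.emod_eq_of_lt (by omega) hlt
      simp only [he]
      rw [hkey, this]
      ring
    · right
      have h3 : ((j * a) % m + a) % m = (j * a) % m + a - m := by
        have hrw : (j * a) % m + a = ((j * a) % m + a - m) + m * 1 := by ring
        conv_lhs => rw [hrw]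
        rw [Int.add_mul_emod_self_left]
        refine Int.emod_eq_of_lt ?_ ?_ <;> omega
      simp only [he]
      rw [hkey, h3]
      omega
  have h_pair : ∀ j : ℤ, ∃ y ∈ X, y = e j ∨ y = e (j + 1) := by
    intro j
    rcases h_step j with h | h
    · obtain ⟨s, hs, hX⟩ := hA (e j)
      simp only [Set.mem_insert_iff, Set.mem_singleton_iff] at hs
      rcases hs with rfl | rfl
      · exact ⟨e j, by simpa using hX, Or.inl rfl⟩
      · exact ⟨e (j + 1), by rw [h]; exact hX, Or.inr rfl⟩
    · obtain ⟨s, hs, hX⟩ := hB (e (j + 1))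
      simp only [Set.mem_insert_iff, Set.mem_singleton_iff] at hs
      rcases hs with rfl | rfl
      · exact ⟨e (j + 1), by simpa using hX, Or.inr rfl⟩
      · refine ⟨e j, ?_, Or.inl rfl⟩
        rw [h, sub_add_cancel] at hX
        exact hX
  have hma : IsCoprime m a := by
    have h1 : IsCoprime (b + a * 1) a := hcop.symm.add_mul_left_left 1
    have h2 : b + a * 1 = m := by omega
    rwa [h2] at h1
  have h_inj : ∀ j k : ℤ, 0 ≤ j → j < m → 0 ≤ k → k < m → e j = e k → j = k := by
    intro j k hj1 hj2 hk1 hk2 hjk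
    have hmod : (j * a) % m = (k * a) % m := by
      simp only [he] at hjk
      omega
    have hdvd : m ∣ (j - k) * a := by
      rw [sub_mul]
      exact Int.dvd_of_emod_eq_zero
        (Int.emod_eq_emod_iff_emod_sub_eq_zero.mp hmod)
    have hdvd2 : m ∣ j - k := hma.dvd_of_dvd_mul_right hdvd
    by_contra hne
    have hne' : j - k ≠ 0 := by omega
    have hle : m ≤ |j - k| :=
      Int.le_of_dvd (abs_pos.mpr hne') ((dvd_abs m (j - k)).mpr hdvd2)
    have : |j - k| < m := abs_lt.mpr ⟨by omega, by omega⟩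
    omega
  have key : ∀ i : ℕ, ∃ y, y ∈ X ∩ Set.Icc t (t + m - 1)
      ∧ (y = e (2 * (i : ℤ)) ∨ y = e (2 * (i : ℤ) + 1)) := by
    intro i
    obtain ⟨y, hyX, hy⟩ := h_pair (2 * (i : ℤ))
    refine ⟨y, ⟨hyX, ?_⟩, hy⟩
    rcases hy with rfl | rfl
    exacts [h_mem _, h_mem _]
  choose g hg1 hg2 using key
  have hM1 : 1 ≤ M := by omega
  have hfin : (X ∩ Set.Icc t (t + m - 1)).Finite :=
    (Set.finite_Icc t (t + m - 1)).inter_of_right X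
  have hcard : (Finset.range M.toNat).card ≤ hfin.toFinset.card := by
    apply Finset.card_le_card_of_injOn g
    · intro i _
      simp only [Finset.mem_coe, Set.Finite.coe_toFinset, Set.Finite.mem_toFinset]
      exact hg1 i
    · intro i hi i' hi' hgi
      simp only [Finset.coe_range, Set.mem_Iio] at hi hi'
      have hiZ : (i : ℤ) < M := by omega
      have hiZ' : (i' : ℤ) < M := by omega
      have hb1 : (0:ℤ) ≤ 2 * (i:ℤ) := by omega
      have hb2 : 2 * (i:ℤ) + 1 < m := by omega
      have hb1' : (0:ℤ) ≤ 2 * (i':ℤ) := by omega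
      have hb2' : 2 * (i':ℤ) + 1 < m := by omega
      rcases hg2 i with h1 | h1 <;> rcases hg2 i' with h2 | h2 <;>
        rw [h1, h2] at hgi <;>
        · have := h_inj _ _ (by omega) (by omega) (by omega) (by omega) hgi
          omega
  calc M.toNat = (Finset.range M.toNat).card := (Finset.card_range _).symm
    _ ≤ hfin.toFinset.card := hcard
    _ = (X ∩ Set.Icc t (t + m - 1)).ncard :=
        (Set.ncard_eq_toFinset_card _ hfin).symm

lemma split_bound (X : Set ℤ) (u v w : ℤ) (huv : u ≤ v + 1) (hvw : v ≤ w) :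
    (X ∩ Set.Icc u v).ncard + (X ∩ Set.Icc (v+1) w).ncard ≤ (X ∩ Set.Icc u w).ncard := by
  have hfin1 : (X ∩ Set.Icc u v).Finite := (Set.finite_Icc _ _).inter_of_right X
  have hfin2 : (X ∩ Set.Icc (v+1) w).Finite := (Set.finite_Icc _ _).inter_of_right X
  have hdisj : Disjoint (X ∩ Set.Icc u v) (X ∩ Set.Icc (v+1) w) := by
    apply Set.disjoint_left.mpr
    rintro z ⟨-, hz1⟩ ⟨-, hz2⟩
    simp only [Set.mem_Icc] at hz1 hz2
    omega
  rw [← Set.ncard_union_eq hdisj hfin1 hfin2]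
  apply Set.ncard_le_ncard ?_ ((Set.finite_Icc u w).inter_of_right X)
  rintro z (⟨hzX, hz⟩ | ⟨hzX, hz⟩) <;> simp only [Set.mem_Icc] at hz <;>
    exact ⟨hzX, Set.mem_Icc.mpr (by omega)⟩

lemma blocks (a b : ℤ) (ha : 0 < a) (hb : 0 < b) (hcop : IsCoprime a b)
    (M : ℤ) (hM : a + b = 2 * M)
    (X : Set ℤ) (hA : Hits X {0, a}) (hB : Hits X {0, b}) (K : ℕ) (c : ℤ) :
    K * M.toNat ≤ (X ∩ Set.Icc c (c + K * (a + b) - 1)).ncard := by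
  induction K generalizing c with
  | zero => simp
  | succ K ih =>
    set t : ℤ := c + (K : ℤ) * (a + b) with ht
    have he1 : c + ((K + 1 : ℕ) : ℤ) * (a + b) - 1 = t + (a + b) - 1 := by
      rw [ht]; push_cast; ring
    rw [he1]
    have key := block_bound a b ha hb hcop M hM X hA hB t
    have ihc : K * M.toNat ≤ (X ∩ Set.Icc c (t - 1)).ncard := by
      have h := ih c
      have : c + (K : ℤ) * (a + b) - 1 = t - 1 := by rw [ht]
      rwa [this] at h
    have hKnn : 0 ≤ (K : ℤ) * (a + b) := mul_nonneg (by positivity) (by omega)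
    have hsplit := split_bound X c (t - 1) (t + (a + b) - 1) (by omega) (by omega)
    rw [sub_add_cancel] at hsplit
    calc (K + 1) * M.toNat = K * M.toNat + M.toNat := by ring
      _ ≤ (X ∩ Set.Icc c (t - 1)).ncard + (X ∩ Set.Icc t (t + (a + b) - 1)).ncard :=
          Nat.add_le_add ihc key
      _ ≤ _ := hsplit

lemma density_lb (a b : ℤ) (ha : 0 < a) (hb : 0 < b) (hoa : Odd a) (hob : Odd b)
    (hcop : IsCoprime a b) (X : Set ℤ) (hA : Hits X {0, a}) (hB : Hits X {0, b}) :
    1 / 2 ≤ lowerDensity X := by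
  obtain ⟨M, hM⟩ : ∃ M : ℤ, a + b = 2 * M := by
    obtain ⟨M, hM⟩ := hoa.add_odd hob
    exact ⟨M, by omega⟩
  have hM1 : 1 ≤ M := by omega
  set m' : ℕ := (a + b).toNat with hm'
  have hm'pos : 0 < m' := by omega
  have hm'2 : (m' : ℤ) = a + b := by omega
  have h4 : m' = 2 * M.toNat := by omega
  have hle : ∀ N : ℕ, ((N : ℝ) + (1 - (M.toNat : ℝ))) / (2 * N + 1)
      ≤ ((X ∩ Set.Icc (-(N:ℤ)) (N:ℤ)).ncard : ℝ) / (2 * N + 1) := by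
    intro N
    set K : ℕ := (2 * N + 1) / m' with hK
    have hc : X ∩ Set.Icc (-(N:ℤ)) (-(N:ℤ) + K * (a + b) - 1)
        ⊆ X ∩ Set.Icc (-(N:ℤ)) (N:ℤ) := by
      apply Set.inter_subset_inter_right
      apply Set.Icc_subset_Icc_right
      have hKm : K * m' ≤ 2 * N + 1 := Nat.div_mul_le_self _ _
      have : (K : ℤ) * (a + b) ≤ 2 * N + 1 := by
        calc (K : ℤ) * (a + b) = ((K * m' : ℕ) : ℤ) := by push_cast [hm'2]; ring
          _ ≤ ((2 * N + 1 : ℕ) : ℤ) := by exact_mod_cast hKm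
          _ = 2 * (N : ℤ) + 1 := by push_cast; ring
      omega
    have h1 : K * M.toNat ≤ (X ∩ Set.Icc (-(N:ℤ)) (N:ℤ)).ncard :=
      le_trans (blocks a b ha hb hcop M hM X hA hB K (-(N:ℤ)))
        (Set.ncard_le_ncard hc ((Set.finite_Icc _ _).inter_of_right X))
    have h2 : m' * K + (2 * N + 1) % m' = 2 * N + 1 := Nat.div_add_mod _ _
    have h3 : (2 * N + 1) % m' + 1 ≤ m' := Nat.mod_lt _ hm'pos
    have c1 : (K : ℝ) * (M.toNat : ℝ) ≤ ((X ∩ Set.Icc (-(N:ℤ)) (N:ℤ)).ncard : ℝ) := by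
      exact_mod_cast Nat.cast_le.mpr h1
    have c2 : (m' : ℝ) * K + (((2 * N + 1) % m' : ℕ) : ℝ) = 2 * (N : ℝ) + 1 := by
      exact_mod_cast h2
    have c3 : (((2 * N + 1) % m' : ℕ) : ℝ) + 1 ≤ (m' : ℝ) := by exact_mod_cast h3
    have c4 : (m' : ℝ) = 2 * (M.toNat : ℝ) := by exact_mod_cast h4
    have hnum : (N : ℝ) + (1 - (M.toNat : ℝ))
        ≤ ((X ∩ Set.Icc (-(N:ℤ)) (N:ℤ)).ncard : ℝ) := by nlinarith
    exact div_le_div_of_nonneg_right hnum (by positivity)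
  have hlow := tendsto_aux (1 - (M.toNat : ℝ))
  have hcob : IsCoboundedUnder (· ≥ ·) atTop (fun N : ℕ =>
      ((X ∩ Set.Icc (-(N:ℤ)) (N:ℤ)).ncard : ℝ) / (2 * N + 1)) := by
    apply IsBoundedUnder.isCoboundedUnder_ge
    refine ⟨1, Filter.eventually_map.mpr (Filter.Eventually.of_forall fun N => ?_)⟩
    have hcard : (X ∩ Set.Icc (-(N:ℤ)) (N:ℤ)).ncard ≤ (Set.Icc (-(N:ℤ)) (N:ℤ)).ncard :=
      Set.ncard_le_ncard Set.inter_subset_right (Set.finite_Icc _ _)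
    have hIcc : (Set.Icc (-(N:ℤ)) (N:ℤ)).ncard = 2 * N + 1 := by
      rw [ncard_Icc_int]; omega
    have hub : ((X ∩ Set.Icc (-(N:ℤ)) (N:ℤ)).ncard : ℝ) ≤ 2 * (N:ℝ) + 1 := by
      rw [hIcc] at hcard
      calc ((X ∩ Set.Icc (-(N:ℤ)) (N:ℤ)).ncard : ℝ) ≤ ((2 * N + 1 : ℕ) : ℝ) :=
          Nat.cast_le.mpr hcard
        _ = 2 * (N:ℝ) + 1 := by push_cast; ring
    exact div_le_one_of_le₀ hub (by positivity)
  have hfinal := Filter.liminf_le_liminf (Filter.Eventually.of_forall hle)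
    hlow.isBoundedUnder_ge hcob
  rw [hlow.liminf_eq] at hfinal
  exact hfinal

theorem stmt1 (a b : ℤ) (ha : 0 < a) (hb : 0 < b) (hoa : Odd a) (hob : Odd b)
    (hcop : IsCoprime a b) :
    piercing {{0, a}, {0, b}} = 1 / 2 ∧
    (∀ S ∈ ({{0, a}, {0, b}} : Set (Set ℤ)), Hits {n : ℤ | Even n} S) ∧
    lowerDensity {n : ℤ | Even n} = 1 / 2 := by
  have hhit : ∀ S ∈ ({{0, a}, {0, b}} : Set (Set ℤ)), Hits {n : ℤ | Even n} S := by
    intro S hS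
    simp only [Set.mem_insert_iff, Set.mem_singleton_iff] at hS
    rcases hS with rfl | rfl
    exacts [hits_evens a hoa, hits_evens b hob]
  have hmem : (1:ℝ)/2 ∈ lowerDensity ''
      {X | ∀ S ∈ ({{0, a}, {0, b}} : Set (Set ℤ)), Hits X S} :=
    ⟨{n : ℤ | Even n}, hhit, evens_density⟩
  have hlb : ∀ y ∈ lowerDensity ''
      {X | ∀ S ∈ ({{0, a}, {0, b}} : Set (Set ℤ)), Hits X S}, (1:ℝ)/2 ≤ y := by
    rintro y ⟨X, hX, rfl⟩
    exact density_lb a b ha hb hoa hob hcop X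
      (hX {0, a} (Set.mem_insert _ _))
      (hX {0, b} (Set.mem_insert_of_mem _ rfl))
  refine ⟨le_antisymm (csInf_le ⟨1/2, hlb⟩ hmem) (le_csInf ⟨_, hmem⟩ hlb), hhit,
    evens_density⟩
end

section
/- Let a, b be coprime positive integers with a + b odd, and let F = {{0, a}, {0, b}}. Then π(F) = (a + b + 1) / (2(a + b)). -/
open Filter Set

lemma cycle_count {M : ℕ} (hM : Odd M) (p : ZMod M → Prop)
    (h : ∀ k, p k ∨ p (k + 1)) : M + 1 ≤ 2 * {k : ZMod M | p k}.ncard := by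
  have hM1 : 1 ≤ M := hM.pos
  haveI : NeZero M := ⟨by omega⟩
  classical
  have hfin : {k : ZMod M | p k}.Finite := Set.toFinite _
  have hmaps : ∀ k ∈ {k : ZMod M | ¬ p k}, k + 1 ∈ {k : ZMod M | p k} := by
    intro k hk
    rcases h k with h1 | h2
    · exact absurd h1 hk
    · exact h2
  have hinj : Set.InjOn (· + 1) {k : ZMod M | ¬ p k} := fun x _ y _ hxy => by
    simpa using hxy
  have hle : {k : ZMod M | ¬ p k}.ncard ≤ {k : ZMod M | p k}.ncard :=
    Set.ncard_le_ncard_of_injOn _ hmaps hinj hfin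
  have hcompl : {k : ZMod M | p k}.ncard + {k : ZMod M | ¬ p k}.ncard = M := by
    have := Set.ncard_add_ncard_compl {k : ZMod M | p k}
    have hc : {k : ZMod M | p k}ᶜ = {k : ZMod M | ¬ p k} := rfl
    rw [hc] at this
    rwa [Nat.card_eq_fintype_card, ZMod.card] at this
  obtain ⟨j, hj⟩ := hM
  omega

lemma window_lower (a b : ℤ) (ha : 0 < a) (hb : 0 < b) (M : ℕ) (hMab : (M:ℤ) = a + b)
    (hModd : Odd M) (hcop : IsCoprime a (M:ℤ)) (X : Set ℤ)
    (hA : ∀ n : ℤ, n ∈ X ∨ n + a ∈ X) (hB : ∀ n : ℤ, n ∈ X ∨ n + b ∈ X)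
    (t : ℤ) : M + 1 ≤ 2 * (X ∩ Set.Icc t (t + M - 1)).ncard := by
  have hM2 : 2 ≤ M := by omega
  haveI : NeZero M := ⟨by omega⟩
  have hMpos : (0:ℤ) < (M:ℤ) := by omega
  set e : ZMod M → ℤ := fun k => t + ((k * (a : ZMod M)).val : ℤ) with he
  -- chain property
  have hchain : ∀ k : ZMod M, e k ∈ X ∨ e (k + 1) ∈ X := by
    intro k
    set x1 := k * (a : ZMod M) with hx1
    set x2 := (k + 1) * (a : ZMod M) with hx2
    set d : ℤ := (x2.val : ℤ) - (x1.val : ℤ) with hd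
    have hv1 : x1.val < M := ZMod.val_lt x1
    have hv2 : x2.val < M := ZMod.val_lt x2
    have hdvd : (M:ℤ) ∣ d - a := by
      rw [← ZMod.intCast_zmod_eq_zero_iff_dvd]
      have h1 : ((x1.val : ℕ) : ZMod M) = x1 := ZMod.natCast_rightInverse x1
      have h2 : ((x2.val : ℕ) : ZMod M) = x2 := ZMod.natCast_rightInverse x2
      rw [hd]
      push_cast
      rw [h1, h2, hx1, hx2]
      ring
    obtain ⟨c, hc⟩ := hdvd
    have haM : a < (M:ℤ) := by omega
    have hd1 : d ≤ (M:ℤ) - 1 := by omega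
    have hd2 : -((M:ℤ) - 1) ≤ d := by omega
    have hc1 : c < 1 := by
      have : (M:ℤ) * c < (M:ℤ) * 1 := by omega
      exact lt_of_mul_lt_mul_left this (le_of_lt hMpos)
    have hc2 : -2 < c := by
      have : (M:ℤ) * (-2) < (M:ℤ) * c := by omega
      exact lt_of_mul_lt_mul_left this (le_of_lt hMpos)
    have hc0 : c = 0 ∨ c = -1 := by omega
    rcases hc0 with rfl | rfl
    · -- d = a
      have hda : e (k+1) = e k + a := by
        simp only [he, ← hx1, ← hx2]; omega
      rcases hA (e k) with h | h
      · exact Or.inl h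
      · right; rwa [hda]
    · -- d = a - M = -b
      have hdb : e k = e (k+1) + b := by
        simp only [he, ← hx1, ← hx2]; omega
      rcases hB (e (k+1)) with h | h
      · exact Or.inr h
      · left; rwa [hdb]
  have hcy := cycle_count hModd (fun k => e k ∈ X) hchain
  refine le_trans hcy (Nat.mul_le_mul_left 2 ?_)
  -- inject {k | e k ∈ X} into X ∩ Icc
  obtain ⟨u, v, huv⟩ := hcop
  have hau : (a : ZMod M) * (u : ZMod M) = 1 := by
    have := congrArg (fun z : ℤ => (z : ZMod M)) huv
    push_cast at this
    simpa [ZMod.natCast_self, mul_comm] using this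
  apply Set.ncard_le_ncard_of_injOn e
  · intro k hk
    refine ⟨hk, Set.mem_Icc.mpr ⟨?_, ?_⟩⟩
    · simp only [he]
      have : (0:ℤ) ≤ ((k * (a:ZMod M)).val : ℤ) := Int.natCast_nonneg _
      omega
    · simp only [he]
      have : ((k * (a:ZMod M)).val : ℤ) < (M:ℤ) := by
        exact_mod_cast ZMod.val_lt (k * (a : ZMod M))
      omega
  · intro k1 h1 k2 h2 hee
    have hval : (k1 * (a : ZMod M)).val = (k2 * (a : ZMod M)).val := by
      simp only [he] at hee; omega
    have hx : k1 * (a : ZMod M) = k2 * (a : ZMod M) := ZMod.val_injective _ hval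
    calc k1 = k1 * ((a:ZMod M) * u) := by rw [hau, mul_one]
      _ = k2 * ((a:ZMod M) * u) := by rw [← mul_assoc, ← mul_assoc, hx]
      _ = k2 := by rw [hau, mul_one]

lemma windows_lower (M : ℕ) (X : Set ℤ) (K : ℕ)
    (hw : ∀ t : ℤ, K ≤ (X ∩ Set.Icc t (t + M - 1)).ncard) :
    ∀ (q : ℕ) (t : ℤ) (L : ℤ), L = q * M → q * K ≤ (X ∩ Set.Icc t (t + L - 1)).ncard := by
  intro q
  induction q with
  | zero => intro t L hL; simp
  | succ q ih =>
    intro t L hL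
    have hexp : L = (q:ℤ) * M + M := by push_cast at hL; linarith [hL]
    set L' : ℤ := L - M with hL'def
    have hL' : L' = q * M := by omega
    have hL'0 : 0 ≤ L' := by rw [hL']; positivity
    have hA := hw t
    have hB := ih (t + M) L' hL'
    set A := X ∩ Set.Icc t (t + M - 1) with hAdef
    set B := X ∩ Set.Icc (t + M) (t + M + L' - 1) with hBdef
    have hdisj : Disjoint A B := by
      rw [Set.disjoint_left]
      rintro x ⟨-, hx⟩ ⟨-, hy⟩
      rw [Set.mem_Icc] at hx hy
      omega
    have hAfin : A.Finite := (Set.finite_Icc _ _).inter_of_right X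
    have hBfin : B.Finite := (Set.finite_Icc _ _).inter_of_right X
    have hsub : A ∪ B ⊆ X ∩ Set.Icc t (t + L - 1) := by
      rintro x (⟨hx1, hx2⟩ | ⟨hx1, hx2⟩) <;>
        · rw [Set.mem_Icc] at hx2
          exact ⟨hx1, Set.mem_Icc.mpr ⟨by omega, by omega⟩⟩
    calc (q + 1) * K = K + q * K := by ring
      _ ≤ A.ncard + B.ncard := Nat.add_le_add hA hB
      _ = (A ∪ B).ncard := (Set.ncard_union_eq hdisj hAfin hBfin).symm
      _ ≤ _ := Set.ncard_le_ncard hsub ((Set.finite_Icc _ _).inter_of_right X)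

lemma windows_upper (M : ℕ) (X : Set ℤ) (K : ℕ)
    (hw : ∀ t : ℤ, (X ∩ Set.Icc t (t + M - 1)).ncard ≤ K) :
    ∀ (q : ℕ) (t : ℤ) (L : ℤ), L = q * M → (X ∩ Set.Icc t (t + L - 1)).ncard ≤ q * K := by
  intro q
  induction q with
  | zero =>
    intro t L hL
    simp only [Nat.cast_zero, zero_mul] at hL
    subst hL
    rw [Set.Icc_eq_empty (by omega), Set.inter_empty, Set.ncard_empty]
    simp
  | succ q ih =>
    intro t L hL
    have hexp : L = (q:ℤ) * M + M := by push_cast at hL; linarith [hL]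
    set L' : ℤ := L - M with hL'def
    have hL' : L' = q * M := by omega
    have hL'0 : 0 ≤ L' := by rw [hL']; positivity
    have hA := hw t
    have hB := ih (t + M) L' hL'
    set A := X ∩ Set.Icc t (t + M - 1) with hAdef
    set B := X ∩ Set.Icc (t + M) (t + M + L' - 1) with hBdef
    have hsub : X ∩ Set.Icc t (t + L - 1) ⊆ A ∪ B := by
      rintro x ⟨hx1, hx2⟩
      rw [Set.mem_Icc] at hx2
      by_cases hc : x ≤ t + M - 1
      · exact Or.inl ⟨hx1, Set.mem_Icc.mpr ⟨hx2.1, hc⟩⟩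
      · exact Or.inr ⟨hx1, Set.mem_Icc.mpr ⟨by omega, by omega⟩⟩
    calc (X ∩ Set.Icc t (t + L - 1)).ncard ≤ (A ∪ B).ncard :=
          Set.ncard_le_ncard hsub ((hAdef ▸ (Set.finite_Icc _ _).inter_of_right X).union
            (hBdef ▸ (Set.finite_Icc _ _).inter_of_right X))
      _ ≤ A.ncard + B.ncard := Set.ncard_union_le A B
      _ ≤ K + q * K := Nat.add_le_add hA hB
      _ = (q + 1) * K := by ring

lemma card_even_range (M : ℕ) :
    2 * ((Finset.range M).filter (fun j => Even j)).card = M + M % 2 := by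
  induction M with
  | zero => simp
  | succ n ih =>
    rw [Finset.range_add_one, Finset.filter_insert]
    by_cases h : Even n
    · rw [if_pos h, Finset.card_insert_of_notMem (by simp)]
      obtain ⟨t, ht⟩ := h
      omega
    · rw [if_neg h]
      have : n % 2 = 1 := Nat.odd_iff.mp (Nat.not_even_iff_odd.mp h)
      omega

lemma ncard_even_val (M : ℕ) (hModd : Odd M) [NeZero M] :
    2 * {s : ZMod M | Even s.val}.ncard = M + 1 := by
  classical
  have h1 : {s : ZMod M | Even s.val}.ncard
      = (Finset.univ.filter (fun s : ZMod M => Even s.val)).card := by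
    rw [Set.ncard_eq_toFinset_card']
    congr 1
    ext s
    simp
  have h2 : (Finset.univ.filter (fun s : ZMod M => Even s.val)).card
      = ((Finset.range M).filter (fun j => Even j)).card := by
    refine Finset.card_nbij' (fun s => s.val) (fun j => (j : ZMod M)) ?_ ?_ ?_ ?_
    · intro s hs
      simp only [Finset.mem_coe, Finset.mem_filter, Finset.mem_univ, true_and] at hs ⊢
      simp only [Finset.mem_range]
      exact ⟨ZMod.val_lt s, hs⟩
    · intro j hj
      simp only [Finset.mem_coe, Finset.mem_filter, Finset.mem_range] at hj
      simp only [Finset.mem_coe, Finset.mem_filter, Finset.mem_univ, true_and]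
      rw [ZMod.val_cast_of_lt hj.1]
      exact hj.2
    · intro s _
      exact ZMod.natCast_rightInverse s
    · intro j hj
      simp only [Finset.mem_coe, Finset.mem_filter, Finset.mem_range] at hj
      exact ZMod.val_cast_of_lt hj.1
  rw [h1, h2]
  obtain ⟨j, hj⟩ := hModd
  have := card_even_range M
  omega

lemma exists_good_pattern (a b : ℤ) (ha : 0 < a) (hb : 0 < b) (M : ℕ) (hMab : (M:ℤ) = a + b)
    (hModd : Odd M) (hcop : IsCoprime a (M:ℤ)) :
    ∃ X : Set ℤ, (∀ n : ℤ, n ∈ X ∨ n + a ∈ X) ∧ (∀ n : ℤ, n ∈ X ∨ n + b ∈ X) ∧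
      (∀ t : ℤ, 2 * (X ∩ Set.Icc t (t + M - 1)).ncard ≤ M + 1) := by
  have hM2 : 2 ≤ M := by omega
  haveI : NeZero M := ⟨by omega⟩
  obtain ⟨u, v, huv⟩ := hcop
  have hau : ((a : ℤ) : ZMod M) * ((u : ℤ) : ZMod M) = 1 := by
    have := congrArg (fun z : ℤ => (z : ZMod M)) huv
    push_cast at this
    simpa [ZMod.natCast_self, mul_comm] using this
  have hab0 : ((a : ℤ) : ZMod M) + ((b : ℤ) : ZMod M) = 0 := by
    have := congrArg (fun z : ℤ => (z : ZMod M)) hMab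
    push_cast at this
    simpa [ZMod.natCast_self] using this.symm
  have hbu : ((b : ℤ) : ZMod M) * ((u : ℤ) : ZMod M) = -1 := by
    have hb' : ((b : ℤ) : ZMod M) = -((a : ℤ) : ZMod M) := by linear_combination hab0
    rw [hb', neg_mul, hau]
  have hMo : M % 2 = 1 := Nat.odd_iff.mp hModd
  refine ⟨{n : ℤ | Even (((n * u : ℤ) : ZMod M)).val}, ?_, ?_, ?_⟩
  · -- hits {0, a}
    intro n
    set s := ((n * u : ℤ) : ZMod M) with hs
    by_cases hk : Even s.val
    · exact Or.inl hk
    · right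
      show Even ((((n + a) * u : ℤ) : ZMod M)).val
      have hs' : s = ((n : ℤ) : ZMod M) * ((u : ℤ) : ZMod M) := by rw [hs]; push_cast; ring
      have h1 : (((n + a) * u : ℤ) : ZMod M) = s + 1 := by
        push_cast
        rw [add_mul, hau, hs']
      have hkM : s.val < M := ZMod.val_lt s
      have hkodd : s.val % 2 = 1 := Nat.odd_iff.mp (Nat.not_even_iff_odd.mp hk)
      have hk1 : s.val + 1 < M := by omega
      have h2 : s + 1 = ((s.val + 1 : ℕ) : ZMod M) := by
        have hv : ((s.val : ℕ) : ZMod M) = s := ZMod.natCast_rightInverse s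
        push_cast
        rw [hv]
      rw [h1, h2, ZMod.val_cast_of_lt hk1]
      exact Nat.even_iff.mpr (by omega)
  · -- hits {0, b}
    intro n
    set s := ((n * u : ℤ) : ZMod M) with hs
    by_cases hk : Even s.val
    · exact Or.inl hk
    · right
      show Even ((((n + b) * u : ℤ) : ZMod M)).val
      have hs' : s = ((n : ℤ) : ZMod M) * ((u : ℤ) : ZMod M) := by rw [hs]; push_cast; ring
      have h1 : (((n + b) * u : ℤ) : ZMod M) = s - 1 := by
        push_cast
        rw [add_mul, hbu, hs']
        ring
      have hkM : s.val < M := ZMod.val_lt s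
      have hkodd : s.val % 2 = 1 := Nat.odd_iff.mp (Nat.not_even_iff_odd.mp hk)
      obtain ⟨j, hj⟩ : ∃ j, s.val = j + 1 := ⟨s.val - 1, by omega⟩
      have h2 : s - 1 = ((j : ℕ) : ZMod M) := by
        have hv : ((s.val : ℕ) : ZMod M) = s := ZMod.natCast_rightInverse s
        rw [hj] at hv
        push_cast at hv
        rw [← hv]
        ring
      rw [h1, h2, ZMod.val_cast_of_lt (by omega : j < M)]
      exact Nat.even_iff.mpr (by omega)
  · -- window upper bound
    intro t
    have hcop' : IsCoprime ((M : ℕ) : ℤ) u := ⟨v, a, by linarith [huv]⟩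
    have hinj : Set.InjOn (fun n : ℤ => ((n * u : ℤ) : ZMod M))
        ({n : ℤ | Even (((n * u : ℤ) : ZMod M)).val} ∩ Set.Icc t (t + M - 1)) := by
      rintro n1 ⟨-, hn1⟩ n2 ⟨-, hn2⟩ heq
      rw [Set.mem_Icc] at hn1 hn2
      simp only at heq
      have hmod : ((n1 * u : ℤ) : ZMod M) = ((n2 * u : ℤ) : ZMod M) := heq
      have hdvd : ((M : ℕ) : ℤ) ∣ (n2 - n1) * u := by
        have := (ZMod.intCast_eq_intCast_iff _ _ _).mp hmod
        have h' := Int.ModEq.dvd this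
        have heq2 : (n2 * u) - (n1 * u) = (n2 - n1) * u := by ring
        rwa [heq2] at h'
      have hdvd2 := hcop'.dvd_of_dvd_mul_right hdvd
      have hz : n2 - n1 = 0 := Int.eq_zero_of_abs_lt_dvd hdvd2 (by rw [abs_lt]; omega)
      omega
    have hle := Set.ncard_le_ncard_of_injOn (fun n : ℤ => ((n * u : ℤ) : ZMod M))
      (fun n hn => (hn.1 : Even (((n * u : ℤ) : ZMod M)).val))
      hinj (Set.toFinite {s : ZMod M | Even s.val})
    have := ncard_even_val M hModd
    omega

open Filter in
lemma liminf_ge_aux {f g : ℕ → ℝ} {c : ℝ} (hg : Tendsto g atTop (nhds c))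
    (hle : ∀ N, g N ≤ f N) (hub : ∀ N, f N ≤ 1) :
    c ≤ Filter.liminf f Filter.atTop := by
  have h := Filter.liminf_le_liminf (Filter.Eventually.of_forall hle)
    hg.isBoundedUnder_ge
    (Filter.isCoboundedUnder_ge_of_le Filter.atTop hub)
  rwa [hg.liminf_eq] at h

open Filter in
lemma liminf_le_aux {f g : ℕ → ℝ} {c : ℝ} (hg : Tendsto g atTop (nhds c))
    (hle : ∀ N, f N ≤ g N) (hlb : ∀ N, 0 ≤ f N) :
    Filter.liminf f Filter.atTop ≤ c := by
  have h := Filter.liminf_le_liminf (Filter.Eventually.of_forall hle)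
    (Filter.isBoundedUnder_of ⟨0, fun n => hlb n⟩)
    hg.isCoboundedUnder_ge
  rwa [hg.liminf_eq] at h

open Filter in
lemma tendsto_2N1 : Tendsto (fun N : ℕ => (2*(N:ℝ)+1)) atTop atTop := by
  apply Filter.tendsto_atTop_add_const_right
  exact (tendsto_natCast_atTop_atTop).const_mul_atTop two_pos

open Filter in
lemma tendsto_sub_aux (K M : ℕ) :
    Tendsto (fun N : ℕ => (K:ℝ)/M - K/(2*N+1)) atTop (nhds ((K:ℝ)/M)) := by
  have h2 := Filter.Tendsto.div_atTop
    (tendsto_const_nhds : Tendsto (fun _ : ℕ => (K:ℝ)) atTop (nhds K)) tendsto_2N1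
  simpa using (tendsto_const_nhds : Tendsto (fun _ : ℕ => (K:ℝ)/M) atTop _).sub h2

open Filter in
lemma tendsto_add_aux (K M : ℕ) :
    Tendsto (fun N : ℕ => (K:ℝ)/M + K/(2*N+1)) atTop (nhds ((K:ℝ)/M)) := by
  have h2 := Filter.Tendsto.div_atTop
    (tendsto_const_nhds : Tendsto (fun _ : ℕ => (K:ℝ)) atTop (nhds K)) tendsto_2N1
  simpa using (tendsto_const_nhds : Tendsto (fun _ : ℕ => (K:ℝ)/M) atTop _).add h2

lemma ratio_le_one (X : Set ℤ) (N : ℕ) :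
    ((X ∩ Set.Icc (-(N:ℤ)) N).ncard : ℝ) / (2*N+1) ≤ 1 := by
  have h : (X ∩ Set.Icc (-(N:ℤ)) N).ncard ≤ 2*N+1 := by
    refine le_trans (Set.ncard_le_ncard Set.inter_subset_right (Set.finite_Icc _ _)) ?_
    rw [show Set.Icc (-(N:ℤ)) N = ↑(Finset.Icc (-(N:ℤ)) N) from (Finset.coe_Icc _ _).symm,
      Set.ncard_coe_finset, Int.card_Icc]
    omega
  rw [div_le_one (by positivity)]
  push_cast
  exact_mod_cast le_trans (Nat.cast_le.mpr h) (by push_cast; linarith)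

lemma lowerDensity_ge_aux (X : Set ℤ) (M K : ℕ) (hM : 0 < M)
    (hwin : ∀ t : ℤ, K ≤ (X ∩ Set.Icc t (t + M - 1)).ncard) :
    (K:ℝ)/M ≤ Filter.liminf (fun N : ℕ =>
      ((X ∩ Set.Icc (-(N:ℤ)) (N:ℤ)).ncard : ℝ) / (2 * N + 1)) Filter.atTop := by
  apply liminf_ge_aux (tendsto_sub_aux K M) _ (fun N => ratio_le_one X N)
  intro N
  obtain ⟨q, hq1, hq2⟩ : ∃ q, q * M ≤ 2*N+1 ∧ 2*N+1 ≤ q * M + M := by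
    refine ⟨(2*N+1)/M, Nat.div_mul_le_self _ _, ?_⟩
    have h1 := Nat.div_add_mod' (2*N+1) M
    have h2 := Nat.mod_lt (2*N+1) hM
    omega
  have hL : ((q * M : ℕ) : ℤ) = (q:ℤ) * (M:ℤ) := by push_cast; ring
  have hwl := windows_lower M X K hwin q (-(N:ℤ)) ((q * M : ℕ) : ℤ) hL
  have hsub : X ∩ Set.Icc (-(N:ℤ)) (-(N:ℤ) + ((q * M : ℕ) : ℤ) - 1)
      ⊆ X ∩ Set.Icc (-(N:ℤ)) (N:ℤ) := by
    apply Set.inter_subset_inter_right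
    apply Set.Icc_subset_Icc_right
    have : ((q * M : ℕ) : ℤ) ≤ 2*(N:ℤ)+1 := by exact_mod_cast hq1
    omega
  have hcount : q * K ≤ (X ∩ Set.Icc (-(N:ℤ)) (N:ℤ)).ncard :=
    le_trans hwl (Set.ncard_le_ncard hsub ((Set.finite_Icc _ _).inter_of_right X))
  set F := (X ∩ Set.Icc (-(N:ℤ)) (N:ℤ)).ncard with hF
  have hnat : K * (2*N+1) ≤ F * M + K * M := by
    calc K * (2*N+1) ≤ K * (q * M + M) := Nat.mul_le_mul_left K hq2
      _ = (q * K) * M + K * M := by ring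
      _ ≤ F * M + K * M := Nat.add_le_add_right (Nat.mul_le_mul_right M hcount) (K * M)
  have e1 : (0:ℝ) < M := by exact_mod_cast hM
  have e2 : (0:ℝ) < 2*(N:ℝ)+1 := by positivity
  rw [sub_le_iff_le_add, ← add_div, div_le_div_iff₀ e1 e2]
  have hnat' : (K:ℝ) * (2*N+1) ≤ F * M + K * M := by exact_mod_cast hnat
  nlinarith [hnat']

lemma lowerDensity_le_aux (X : Set ℤ) (M K : ℕ) (hM : 0 < M)
    (hwin : ∀ t : ℤ, (X ∩ Set.Icc t (t + M - 1)).ncard ≤ K) :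
    Filter.liminf (fun N : ℕ =>
      ((X ∩ Set.Icc (-(N:ℤ)) (N:ℤ)).ncard : ℝ) / (2 * N + 1)) Filter.atTop ≤ (K:ℝ)/M := by
  apply liminf_le_aux (tendsto_add_aux K M) _ (fun N => by positivity)
  intro N
  obtain ⟨q, hq1, hq2⟩ : ∃ q, 2*N+1 ≤ q * M ∧ q * M ≤ 2*N+1 + M := by
    refine ⟨(2*N+1)/M + 1, ?_, ?_⟩ <;> rw [add_one_mul]
    · have h1 := Nat.div_add_mod' (2*N+1) M
      have h2 := Nat.mod_lt (2*N+1) hM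
      omega
    · have := Nat.div_mul_le_self (2*N+1) M
      omega
  have hL : ((q * M : ℕ) : ℤ) = (q:ℤ) * (M:ℤ) := by push_cast; ring
  have hwu := windows_upper M X K hwin q (-(N:ℤ)) ((q * M : ℕ) : ℤ) hL
  have hsub : X ∩ Set.Icc (-(N:ℤ)) (N:ℤ)
      ⊆ X ∩ Set.Icc (-(N:ℤ)) (-(N:ℤ) + ((q * M : ℕ) : ℤ) - 1) := by
    apply Set.inter_subset_inter_right
    apply Set.Icc_subset_Icc_right
    have : 2*(N:ℤ)+1 ≤ ((q * M : ℕ) : ℤ) := by exact_mod_cast hq1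
    omega
  have hcount : (X ∩ Set.Icc (-(N:ℤ)) (N:ℤ)).ncard ≤ q * K :=
    le_trans (Set.ncard_le_ncard hsub ((Set.finite_Icc _ _).inter_of_right X)) hwu
  set F := (X ∩ Set.Icc (-(N:ℤ)) (N:ℤ)).ncard with hF
  have hnat : F * M ≤ K * (2*N+1) + K * M := by
    calc F * M ≤ (q * K) * M := Nat.mul_le_mul_right M hcount
      _ = K * (q * M) := by ring
      _ ≤ K * (2*N+1 + M) := Nat.mul_le_mul_left K hq2
      _ = K * (2*N+1) + K * M := by ring
  have e1 : (0:ℝ) < M := by exact_mod_cast hM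
  have e2 : (0:ℝ) < 2*(N:ℝ)+1 := by positivity
  rw [div_add_div _ _ (ne_of_gt e1) (ne_of_gt e2), div_le_div_iff₀ e2 (by positivity)]
  have hnat' : (F:ℝ) * M ≤ K * (2*N+1) + K * M := by exact_mod_cast hnat
  nlinarith [hnat']

theorem stmt2 (a b : ℤ) (ha : 0 < a) (hb : 0 < b) (hcop : IsCoprime a b)
    (hodd : Odd (a + b)) :
    piercing {{0, a}, {0, b}} = (a + b + 1 : ℝ) / (2 * (a + b)) := by
  set M : ℕ := (a+b).toNat with hMdef
  have hMab : ((M:ℕ) : ℤ) = a + b := Int.toNat_of_nonneg (by omega)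
  have hModd : Odd M := by rwa [← Int.odd_coe_nat, hMab]
  have hM2 : 2 ≤ M := by omega
  have hM0 : 0 < M := by omega
  have hcopM : IsCoprime a ((M:ℕ):ℤ) := by
    rw [hMab]
    have := hcop.add_mul_left_right 1
    simpa [add_comm] using this
  set K : ℕ := (M+1)/2 with hKdef
  have h2K : 2 * K = M + 1 := by obtain ⟨j, hj⟩ := hModd; omega
  -- the target value equals K/M
  have hval : ((a:ℝ) + b + 1) / (2 * ((a:ℝ) + b)) = (K:ℝ)/M := by
    have hMr : ((M:ℕ):ℝ) = (a:ℝ) + b := by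
      have := congrArg (fun z : ℤ => (z:ℝ)) hMab
      push_cast at this
      exact this
    have hKr : 2*(K:ℝ) = (M:ℝ) + 1 := by exact_mod_cast h2K
    have hMpos : (0:ℝ) < M := by exact_mod_cast hM0
    rw [← hMr]
    rw [div_eq_div_iff (by positivity) (ne_of_gt hMpos)]
    linear_combination (-(M:ℝ)) * hKr
  -- characterization of hitting both ships
  have hhits : ∀ X : Set ℤ, (∀ S ∈ ({{0,a},{0,b}} : Set (Set ℤ)), Hits X S) ↔
      ((∀ n : ℤ, n ∈ X ∨ n + a ∈ X) ∧ (∀ n : ℤ, n ∈ X ∨ n + b ∈ X)) := by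
    intro X
    constructor
    · intro h
      constructor
      · intro n
        obtain ⟨s, hs, hsx⟩ := h {0, a} (by simp) n
        rcases hs with rfl | rfl
        · exact Or.inl (by simpa using hsx)
        · exact Or.inr hsx
      · intro n
        obtain ⟨s, hs, hsx⟩ := h {0, b} (by simp) n
        rcases hs with rfl | rfl
        · exact Or.inl (by simpa using hsx)
        · exact Or.inr hsx
    · rintro ⟨hA, hB⟩ S hS
      rcases hS with rfl | rfl
      · intro n
        rcases hA n with h | h
        · exact ⟨0, by simp, by simpa using h⟩
        · exact ⟨a, by simp, h⟩
      · intro n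
        rcases hB n with h | h
        · exact ⟨0, by simp, by simpa using h⟩
        · exact ⟨b, by simp, h⟩
  obtain ⟨X₀, hX1, hX2, hX3⟩ := exists_good_pattern a b ha hb M hMab hModd hcopM
  rw [hval, piercing]
  apply le_antisymm
  · -- piercing ≤ K/M via the good pattern
    have hwin : ∀ t : ℤ, (X₀ ∩ Set.Icc t (t + M - 1)).ncard ≤ K := fun t => by
      have := hX3 t; omega
    have hden : lowerDensity X₀ ≤ (K:ℝ)/M := by
      rw [lowerDensity]
      exact lowerDensity_le_aux X₀ M K hM0 hwin
    refine le_trans (csInf_le ?_ ?_) hden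
    · refine ⟨0, ?_⟩
      rintro y ⟨X, -, rfl⟩
      rw [lowerDensity]
      exact liminf_ge_aux tendsto_const_nhds (fun N => by positivity) (ratio_le_one X)
    · exact ⟨X₀, (hhits X₀).mpr ⟨hX1, hX2⟩, rfl⟩
  · apply le_csInf
    · exact ⟨_, ⟨X₀, (hhits X₀).mpr ⟨hX1, hX2⟩, rfl⟩⟩
    · rintro y ⟨X, hX, rfl⟩
      obtain ⟨hA, hB⟩ := (hhits X).mp hX
      have hwin : ∀ t : ℤ, K ≤ (X ∩ Set.Icc t (t + M - 1)).ncard := fun t => by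
        have := window_lower a b ha hb M hMab hModd hcopM X hA hB t; omega
      rw [lowerDensity]
      exact lowerDensity_ge_aux X M K hM0 hwin
end

section
/- For any positive integer d and any finite family F of finite subsets of ℤ, the optimal piercing density is scale-invariant: π(dF) = π(F), where dF = {dS : S ∈ F} and dS = {d·x : x ∈ S}. -/
open Filter

namespace StmtAux

open scoped Classical in
/-- The finite set of elements of `X` in `[a,b]`. -/
noncomputable def FCs (X : Set ℤ) (a b : ℤ) : Finset ℤ := (Finset.Icc a b).filter (· ∈ X)

lemma mem_FCs {X : Set ℤ} {a b m : ℤ} : m ∈ FCs X a b ↔ m ∈ X ∧ a ≤ m ∧ m ≤ b := by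
  classical
  simp only [FCs, Finset.mem_filter, Finset.mem_Icc]
  tauto

lemma ncard_eq_FCs (X : Set ℤ) (a b : ℤ) :
    (X ∩ Set.Icc a b).ncard = (FCs X a b).card := by
  rw [← Set.ncard_coe_finset]
  congr 1
  ext m
  simp [mem_FCs, Set.mem_Icc]

/-- The density counting function. -/
noncomputable def den (X : Set ℤ) (N : ℕ) : ℝ := ((FCs X (-(N:ℤ)) N).card : ℝ) / (2 * N + 1)

lemma lowerDensity_eq (X : Set ℤ) : lowerDensity X = liminf (den X) atTop := by
  unfold lowerDensity den
  congr 1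
  funext N
  rw [ncard_eq_FCs]

lemma FCs_card_le (X : Set ℤ) (N : ℕ) : (FCs X (-(N:ℤ)) N).card ≤ 2 * N + 1 := by
  classical
  have h1 : (FCs X (-(N:ℤ)) N).card ≤ (Finset.Icc (-(N:ℤ)) N).card :=
    Finset.card_filter_le _ _
  rw [Int.card_Icc] at h1
  omega

lemma den_nonneg (X : Set ℤ) (N : ℕ) : 0 ≤ den X N := by
  unfold den; positivity

lemma den_le_one (X : Set ℤ) (N : ℕ) : den X N ≤ 1 := by
  unfold den
  rw [div_le_one (by positivity)]
  have h := FCs_card_le X N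
  have h2 : ((FCs X (-(N:ℤ)) N).card : ℝ) ≤ ((2 * N + 1 : ℕ) : ℝ) := Nat.cast_le.mpr h
  push_cast at h2
  linarith

lemma isBdd {u : ℕ → ℝ} (h : ∀ n, 0 ≤ u n) : IsBoundedUnder (· ≥ ·) atTop u :=
  isBoundedUnder_of ⟨0, h⟩

lemma isCob {u : ℕ → ℝ} {c : ℝ} (h : ∀ n, u n ≤ c) : IsCoboundedUnder (· ≥ ·) atTop u :=
  isCoboundedUnder_ge_of_le atTop h

lemma lowerDensity_nonneg (X : Set ℤ) : 0 ≤ lowerDensity X := by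
  rw [lowerDensity_eq]
  exact le_liminf_of_le (isCob (den_le_one X)) (Eventually.of_forall (den_nonneg X))

/-- helper: to show `liminf u ≤ L` it suffices that every `a < liminf u` satisfies `a ≤ L`. -/
lemma liminf_le_of_lt_imp {u : ℕ → ℝ} {L : ℝ}
    (h : ∀ a, a < liminf u atTop → a ≤ L) : liminf u atTop ≤ L := by
  by_contra hlt
  push_neg at hlt
  obtain ⟨a, h1, h2⟩ := exists_between hlt
  exact absurd (h a h2) (not_le.2 h1)

/-- liminf of a composition with a "surjective-ish" reindexing is at most the liminf. -/
lemma liminf_comp_add_le (f : ℕ → ℝ) (h0 : ∀ n, 0 ≤ f n) (h1 : ∀ n, f n ≤ 1)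
    (φ : ℕ → ℕ) (hφ : ∀ M₀ : ℕ, ∃ M₁ : ℕ, ∀ M ≥ M₁, ∃ N ≥ M₀, φ N = M) (δ : ℝ) (hδ : 0 ≤ δ) :
    liminf (fun N => f (φ N) + δ) atTop ≤ liminf f atTop + δ := by
  apply liminf_le_of_lt_imp
  intro a ha
  have hev := eventually_lt_of_lt_liminf ha (isBdd (fun n => by have := h0 (φ n); linarith))
  rw [eventually_atTop] at hev
  obtain ⟨M₀, hM₀⟩ := hev
  obtain ⟨M₁, hM₁⟩ := hφ M₀
  have hev2 : ∀ᶠ M in atTop, a - δ ≤ f M := by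
    rw [eventually_atTop]
    refine ⟨M₁, fun M hM => ?_⟩
    obtain ⟨N, hN, rfl⟩ := hM₁ M hM
    have := hM₀ N hN
    linarith
  have := le_liminf_of_le (isCob h1) hev2
  linarith

lemma liminf_le_liminf_comp (f : ℕ → ℝ) (h0 : ∀ n, 0 ≤ f n) (h1 : ∀ n, f n ≤ 1)
    (φ : ℕ → ℕ) (hφ : Tendsto φ atTop atTop) :
    liminf f atTop ≤ liminf (fun n => f (φ n)) atTop := by
  have hmap : liminf (fun n => f (φ n)) atTop = liminf f (Filter.map φ atTop) := by
    rw [Filter.liminf, Filter.liminf, Filter.map_map]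
    rfl
  rw [hmap]
  haveI : (Filter.map φ atTop).NeBot := Filter.map_neBot
  exact liminf_le_liminf_of_le hφ (isBdd h0)
    (isCoboundedUnder_ge_of_le _ h1)

lemma liminf_affine_le (g : ℕ → ℝ) (h0 : ∀ n, 0 ≤ g n) (h1 : ∀ n, g n ≤ 1)
    (c δ : ℝ) (hc : 0 < c) (hδ : 0 ≤ δ) :
    liminf (fun n => c * g n + δ) atTop ≤ c * liminf g atTop + δ := by
  apply liminf_le_of_lt_imp
  intro a ha
  have hev := eventually_lt_of_lt_liminf ha
    (isBdd (fun n => by have := h0 n; nlinarith))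
  have hev2 : ∀ᶠ n in atTop, (a - δ) / c ≤ g n := by
    refine hev.mono fun n h => ?_
    rw [div_le_iff₀ hc]
    nlinarith
  have h2 := le_liminf_of_le (isCob h1) hev2
  rw [div_le_iff₀ hc] at h2
  nlinarith

lemma liminf_add_ge (u v : ℕ → ℝ) (hu0 : ∀ n, 0 ≤ u n) (hv0 : ∀ n, 0 ≤ v n)
    (C : ℝ) (hC : ∀ n, u n + v n ≤ C) :
    liminf u atTop + liminf v atTop ≤ liminf (fun n => u n + v n) atTop := by
  refine le_of_forall_pos_le_add ?_
  intro ε hε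
  have hu' : ∀ᶠ n in atTop, liminf u atTop - ε / 2 < u n :=
    eventually_lt_of_lt_liminf (by linarith) (isBdd hu0)
  have hv' : ∀ᶠ n in atTop, liminf v atTop - ε / 2 < v n :=
    eventually_lt_of_lt_liminf (by linarith) (isBdd hv0)
  have hev : ∀ᶠ n in atTop, liminf u atTop + liminf v atTop - ε ≤ u n + v n :=
    (hu'.and hv').mono fun n ⟨h1, h2⟩ => by linarith
  have := le_liminf_of_le (isCob hC) hev
  linarith

lemma sum_liminf_le {ι : Type*} (s : Finset ι) (f : ι → ℕ → ℝ)
    (h0 : ∀ i ∈ s, ∀ n, 0 ≤ f i n) (h1 : ∀ i ∈ s, ∀ n, f i n ≤ 1) :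
    ∑ i ∈ s, liminf (f i) atTop ≤ liminf (fun n => ∑ i ∈ s, f i n) atTop := by
  classical
  induction s using Finset.induction_on with
  | empty => simp [liminf_const]
  | @insert a s ha ih =>
    rw [Finset.sum_insert ha]
    have hsum0 : ∀ n, 0 ≤ ∑ i ∈ s, f i n := fun n =>
      Finset.sum_nonneg fun i hi => h0 i (Finset.mem_insert_of_mem hi) n
    have hsumC : ∀ n, f a n + ∑ i ∈ s, f i n ≤ 1 + s.card := by
      intro n
      have h2 : ∑ i ∈ s, f i n ≤ ∑ i ∈ s, (1:ℝ) :=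
        Finset.sum_le_sum fun i hi => h1 i (Finset.mem_insert_of_mem hi) n
      simp only [Finset.sum_const, nsmul_eq_mul, mul_one] at h2
      have := h1 a (Finset.mem_insert_self a s) n
      linarith
    calc liminf (f a) atTop + ∑ i ∈ s, liminf (f i) atTop
        ≤ liminf (f a) atTop + liminf (fun n => ∑ i ∈ s, f i n) atTop := by
          have := ih (fun i hi => h0 i (Finset.mem_insert_of_mem hi))
            (fun i hi => h1 i (Finset.mem_insert_of_mem hi))
          linarith
      _ ≤ liminf (fun n => f a n + ∑ i ∈ s, f i n) atTop :=
          liminf_add_ge _ _ (fun n => h0 a (Finset.mem_insert_self a s) n) hsum0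
            (1 + s.card) hsumC
      _ = liminf (fun n => ∑ i ∈ insert a s, f i n) atTop := by
          congr 1; funext n; rw [Finset.sum_insert ha]

lemma emod_lemma {k r d : ℤ} (h0 : 0 ≤ r) (h1 : r < d) : (d * k + r) % d = r := by
  rw [add_comm, Int.add_mul_emod_self_left r d k, Int.emod_eq_of_lt h0 h1]

lemma ediv_lemma {k r d : ℤ} (hd : 0 < d) (h0 : 0 ≤ r) (h1 : r < d) :
    (d * k + r) / d = k := by
  rw [add_comm, Int.add_mul_ediv_left r k hd.ne', Int.ediv_eq_zero_of_lt h0 h1, zero_add]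

/-- Direction A: from a pattern hitting the original ships, build one for the scaled ships. -/
lemma dirA (d : ℤ) (hd : 0 < d) (X : Set ℤ) :
    ∃ Y : Set ℤ, (∀ S : Set ℤ, Hits X S → Hits Y ((fun x => d * x) '' S)) ∧
      lowerDensity Y ≤ lowerDensity X := by
  classical
  set e : ℕ := d.toNat with he_def
  have he : (e : ℤ) = d := Int.toNat_of_nonneg hd.le
  have he1 : 1 ≤ e := by
    have : (0:ℤ) < (e:ℤ) := by rw [he]; exact hd
    exact_mod_cast this
  set Y : Set ℤ := {m | ∃ k ∈ X, ∃ r : ℤ, 0 ≤ r ∧ r < d ∧ m = d * k + r} with hY_def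
  have hhit : ∀ S : Set ℤ, Hits X S → Hits Y ((fun x => d * x) '' S) := by
    intro S hX n
    obtain ⟨s, hs, hsX⟩ := hX (n / d)
    refine ⟨d * s, ⟨s, hs, rfl⟩, ?_⟩
    refine ⟨n / d + s, hsX, n % d, Int.emod_nonneg n hd.ne', Int.emod_lt_of_pos n hd, ?_⟩
    have h1 := Int.mul_ediv_add_emod n d
    have h2 : d * (n / d + s) = d * (n / d) + d * s := by ring
    linarith
  refine ⟨Y, hhit, ?_⟩
  -- counting estimate
  have hcnt : ∀ N : ℕ,
      (FCs Y (-(N:ℤ)) N).card ≤ (FCs X (-((N / e + 1 : ℕ) : ℤ)) ((N / e + 1 : ℕ) : ℤ)).card * e := by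
    intro N
    set M : ℤ := ((N / e : ℕ) : ℤ) with hM_def
    have hc1 : ((N / e + 1 : ℕ) : ℤ) = M + 1 := by push_cast [hM_def]; ring
    have hm1 : (e : ℤ) * M + ((N % e : ℕ) : ℤ) = (N : ℤ) := by
      rw [hM_def]; exact_mod_cast Nat.div_add_mod N e
    have hm2 : ((N % e : ℕ) : ℤ) < (e : ℤ) := by
      exact_mod_cast Nat.mod_lt N (show 0 < e by omega)
    rw [hc1]
    have key : (FCs Y (-(N:ℤ)) N).card ≤
        ((FCs X (-(M + 1)) (M + 1)) ×ˢ Finset.Icc (0:ℤ) (d-1)).card := by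
      apply Finset.card_le_card_of_injOn (fun m => (m / d, m % d))
      · intro m hm
        rw [Finset.mem_coe, mem_FCs] at hm
        obtain ⟨⟨k, hk, r, hr0, hrd, rfl⟩, h1, h2⟩ := hm
        rw [Finset.mem_coe, Finset.mem_product, Finset.mem_Icc, mem_FCs]
        dsimp only
        rw [ediv_lemma hd hr0 hrd, emod_lemma hr0 hrd]
        have hdM : d * M = (e:ℤ) * M := by rw [he]
        refine ⟨⟨hk, ?_, ?_⟩, hr0, by omega⟩
        · -- -(M+1) ≤ k
          have h5 : d * (-(M + 2)) < d * k := by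
            have e1 : d * (-(M + 2)) = -(d * M) - 2 * d := by ring
            linarith
          have h6 : -(M + 2) < k := lt_of_mul_lt_mul_left h5 hd.le
          omega
        · -- k ≤ M + 1
          have h5 : d * k < d * (M + 1) := by
            have e1 : d * (M + 1) = d * M + d := by ring
            linarith
          have h6 : k < M + 1 := lt_of_mul_lt_mul_left h5 hd.le
          omega
      · intro m1 h1 m2 h2 heq
        have q1 := Int.mul_ediv_add_emod m1 d
        have q2 := Int.mul_ediv_add_emod m2 d
        rw [Prod.mk.injEq] at heq
        obtain ⟨e1, e2⟩ := heq
        rw [e1, e2] at q1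
        linarith
    rw [Finset.card_product, Int.card_Icc] at key
    have : (d - 1 + 1 - 0).toNat = e := by rw [he_def]; omega
    rwa [this] at key
  -- density estimate
  rw [lowerDensity_eq, lowerDensity_eq]
  refine le_of_forall_pos_le_add ?_
  intro δ hδ
  obtain ⟨K, hK⟩ := exists_nat_ge ((3 * e : ℝ) / δ)
  have hK' : 3 * (e:ℝ) ≤ δ * K := by
    rw [div_le_iff₀ hδ] at hK; linarith
  have hev : ∀ᶠ N in atTop, den Y N ≤ den X (N / e + 1) + δ := by
    rw [eventually_atTop]
    refine ⟨K, fun N hN => ?_⟩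
    have hc := hcnt N
    set M' : ℕ := N / e + 1 with hM'_def
    set q : ℝ := den X M' with hq_def
    have h2M : (0:ℝ) < 2 * (M':ℝ) + 1 := by positivity
    have h2N : (0:ℝ) < 2 * (N:ℝ) + 1 := by positivity
    have hq0 : 0 ≤ q := den_nonneg X M'
    have hq1 : q ≤ 1 := den_le_one X M'
    have hcX : ((FCs X (-(M':ℤ)) (M':ℤ)).card : ℝ) = q * (2 * (M':ℝ) + 1) := by
      rw [hq_def]; unfold den
      rw [div_mul_cancel₀ _ h2M.ne']
    have hcast : (-(M':ℤ)) = -((N / e + 1 : ℕ) : ℤ) ∧ ((M':ℤ)) = ((N / e + 1 : ℕ) : ℤ) := by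
      constructor <;> simp [hM'_def]
    have hcY : ((FCs Y (-(N:ℤ)) N).card : ℝ) ≤ q * (2 * (M':ℝ) + 1) * e := by
      rw [← hcX]
      have : ((FCs Y (-(N:ℤ)) N).card : ℝ) ≤
          ((FCs X (-((N / e + 1 : ℕ) : ℤ)) ((N / e + 1 : ℕ) : ℤ)).card : ℝ) * e := by
        exact_mod_cast hc
      simpa [hM'_def] using this
    -- basic inequalities
    have hEM : (e:ℝ) * ((M':ℝ) - 1) ≤ (N:ℝ) := by
      have h1 : (N / e) * e ≤ N := Nat.div_mul_le_self N e
      have h1' : ((N / e : ℕ):ℝ) * (e:ℝ) ≤ (N:ℝ) := by exact_mod_cast h1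
      have h2 : ((M':ℝ) - 1) = ((N / e : ℕ):ℝ) := by
        rw [hM'_def]; push_cast; ring
      rw [h2]; linarith [h1']
    have hδN : 3 * (e:ℝ) ≤ δ * (2 * (N:ℝ) + 1) := by
      have : (K:ℝ) ≤ (N:ℝ) := by exact_mod_cast hN
      nlinarith
    have hE1 : (1:ℝ) ≤ (e:ℝ) := by exact_mod_cast he1
    -- conclude
    unfold den
    rw [div_le_iff₀ h2N]
    calc ((FCs Y (-(N:ℤ)) N).card : ℝ) ≤ q * (2 * (M':ℝ) + 1) * e := hcY
      _ ≤ (den X M' + δ) * (2 * (N:ℝ) + 1) := by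
          rw [← hq_def]
          have h3 : 2 * (e:ℝ) * (M':ℝ) + (e:ℝ) - 2 * (N:ℝ) - 1 ≤ 3 * (e:ℝ) - 1 := by
            nlinarith
          nlinarith [mul_le_of_le_one_left (show (0:ℝ) ≤ 3 * (e:ℝ) - 1 by linarith) hq1,
            mul_nonneg hq0 (le_of_lt h2N)]
  calc liminf (den Y) atTop
      ≤ liminf (fun N => den X (N / e + 1) + δ) atTop := by
        refine liminf_le_liminf hev (isBdd (den_nonneg Y)) (isCob (c := 1 + δ) fun n => ?_)
        have := den_le_one X (n / e + 1); linarith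
    _ ≤ liminf (den X) atTop + δ := by
        refine liminf_comp_add_le (den X) (den_nonneg X) (den_le_one X) (fun N => N / e + 1)
          ?_ δ hδ.le
        intro M₀
        refine ⟨M₀ + 1, fun M hM => ⟨e * (M - 1), ?_, ?_⟩⟩
        · have h1 : M - 1 ≤ e * (M - 1) := Nat.le_mul_of_pos_left _ (by omega)
          omega
        · show e * (M - 1) / e + 1 = M
          rw [Nat.mul_div_cancel_left _ (by omega : 0 < e)]
          omega

/-- Direction B: from a pattern hitting the scaled ships, build one for the original ships. -/
lemma dirB (d : ℤ) (hd : 0 < d) (Y : Set ℤ) :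
    ∃ Z : Set ℤ, (∀ S : Set ℤ, Hits Y ((fun x => d * x) '' S) → Hits Z S) ∧
      lowerDensity Z ≤ lowerDensity Y := by
  classical
  set e : ℕ := d.toNat with he_def
  have he : (e : ℤ) = d := Int.toNat_of_nonneg hd.le
  have he1 : 1 ≤ e := by
    have : (0:ℤ) < (e:ℤ) := by rw [he]; exact hd
    exact_mod_cast this
  set Yr : ℤ → Set ℤ := fun r => {k | d * k + r ∈ Y} with hYr_def
  have hhit : ∀ r : ℤ, ∀ S : Set ℤ, Hits Y ((fun x => d * x) '' S) → Hits (Yr r) S := by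
    intro r S hYS n
    obtain ⟨s', ⟨s, hs, rfl⟩, hin⟩ := hYS (d * n + r)
    refine ⟨s, hs, ?_⟩
    show d * (n + s) + r ∈ Y
    have : d * (n + s) + r = d * n + r + d * s := by ring
    rwa [this]
  set s : Finset ℤ := Finset.Icc (0:ℤ) (d-1) with hs_def
  have hs_card : s.card = e := by
    rw [hs_def, Int.card_Icc, he_def]; omega
  have hs_ne : s.Nonempty := ⟨0, by rw [hs_def]; rw [Finset.mem_Icc]; omega⟩
  -- counting estimate
  have hcnt : ∀ N : ℕ, e ≤ N →
      ∑ r ∈ s, (FCs (Yr r) (-((N / e - 1 : ℕ) : ℤ)) ((N / e - 1 : ℕ) : ℤ)).card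
        ≤ (FCs Y (-(N:ℤ)) N).card := by
    intro N hNe
    set Mn : ℕ := N / e - 1 with hMn_def
    set M : ℤ := (Mn : ℤ) with hM_def
    have hM1 : Mn + 1 = N / e := by
      have : 1 ≤ N / e := (Nat.one_le_div_iff (by omega)).mpr hNe
      omega
    have hNM : (e : ℤ) * (M + 1) ≤ (N : ℤ) := by
      have h2 : e * (Mn + 1) ≤ N := by
        calc e * (Mn + 1) = (N / e) * e := by rw [hM1, Nat.mul_comm]
          _ ≤ N := Nat.div_mul_le_self N e
      rw [hM_def]
      exact_mod_cast h2
    set t : ℤ → Finset ℤ := fun r => (FCs (Yr r) (-M) M).image (fun k => d * k + r) with ht_def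
    have hinj : ∀ r : ℤ, Function.Injective (fun k : ℤ => d * k + r) := by
      intro r a b hab
      simp only [add_left_inj] at hab
      exact mul_left_cancel₀ hd.ne' hab
    have hcard : ∀ r, (t r).card = (FCs (Yr r) (-M) M).card := fun r =>
      Finset.card_image_of_injective _ (hinj r)
    have hmemt : ∀ r ∈ s, ∀ m ∈ t r, m % d = r := by
      intro r hr m hm
      rw [ht_def] at hm
      simp only [Finset.mem_image] at hm
      obtain ⟨k, _, rfl⟩ := hm
      rw [hs_def, Finset.mem_Icc] at hr
      exact emod_lemma hr.1 (by omega)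
    have hdisj : ∀ r ∈ s, ∀ r' ∈ s, r ≠ r' → Disjoint (t r) (t r') := by
      intro r hr r' hr' hne
      rw [Finset.disjoint_left]
      intro m hm hm'
      have := hmemt r hr m hm
      have := hmemt r' hr' m hm'
      omega
    have hsub : s.biUnion t ⊆ FCs Y (-(N:ℤ)) N := by
      intro m hm
      rw [Finset.mem_biUnion] at hm
      obtain ⟨r, hr, hmt⟩ := hm
      rw [ht_def] at hmt
      simp only [Finset.mem_image] at hmt
      obtain ⟨k, hk, rfl⟩ := hmt
      rw [mem_FCs] at hk
      obtain ⟨hkY, hk1, hk2⟩ := hk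
      rw [hs_def, Finset.mem_Icc] at hr
      rw [mem_FCs]
      have hb1 : d * (-M) ≤ d * k := by
        exact mul_le_mul_of_nonneg_left hk1 hd.le
      have hb2 : d * k ≤ d * M := mul_le_mul_of_nonneg_left hk2 hd.le
      have he2 : d * (M + 1) = d * M + d := by ring
      have he3 : d * (-M) = -(d * M) := by ring
      have hdM : (e:ℤ) * (M+1) = d * (M+1) := by rw [he]
      have hdM0 : 0 ≤ d * M := by
        have : (0:ℤ) ≤ M := by rw [hM_def]; exact_mod_cast Nat.zero_le Mn
        positivity
      exact ⟨hkY, by linarith, by linarith⟩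
    calc ∑ r ∈ s, (FCs (Yr r) (-((N / e - 1 : ℕ) : ℤ)) ((N / e - 1 : ℕ) : ℤ)).card
        = ∑ r ∈ s, (t r).card := by
          refine Finset.sum_congr rfl fun r _ => ?_
          rw [hcard r]
      _ = (s.biUnion t).card := (Finset.card_biUnion hdisj).symm
      _ ≤ (FCs Y (-(N:ℤ)) N).card := Finset.card_le_card hsub
  -- pick the best residue
  suffices hex : ∃ r ∈ s, lowerDensity (Yr r) ≤ lowerDensity Y by
    obtain ⟨r, _, hr⟩ := hex
    exact ⟨Yr r, hhit r, hr⟩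
  apply Finset.exists_le_of_sum_le hs_ne
  rw [Finset.sum_const, hs_card, nsmul_eq_mul]
  -- ∑ r, lowerDensity (Yr r) ≤ e * lowerDensity Y
  refine le_of_forall_pos_le_add ?_
  intro δ hδ
  obtain ⟨K, hK⟩ := exists_nat_ge ((3 * e : ℝ) / δ)
  have hK' : 3 * (e:ℝ) ≤ δ * K := by
    rw [div_le_iff₀ hδ] at hK; linarith
  set φ : ℕ → ℕ := fun N => N / e - 1 with hφ_def
  have hφ_tendsto : Tendsto φ atTop atTop := by
    rw [tendsto_atTop_atTop]
    intro b
    refine ⟨e * (b + 1), fun N hN => ?_⟩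
    have : b + 1 ≤ N / e := (Nat.le_div_iff_mul_le (by omega)).mpr
      (by rw [Nat.mul_comm]; exact hN)
    simp only [hφ_def]
    omega
  have hevB : ∀ᶠ N in atTop, ∑ r ∈ s, den (Yr r) (φ N) ≤ (e:ℝ) * den Y N + δ := by
    rw [eventually_atTop]
    refine ⟨e * (K + 1), fun N hN => ?_⟩
    have hNe : e ≤ N := by
      calc e = e * 1 := by ring
        _ ≤ e * (K + 1) := by exact Nat.mul_le_mul_left e (by omega)
        _ ≤ N := hN
    set Mn : ℕ := N / e - 1 with hMn_def
    have hφN : φ N = Mn := rfl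
    have hMK : K ≤ Mn := by
      have h1 : K + 1 ≤ N / e := (Nat.le_div_iff_mul_le (by omega)).mpr
        (by rw [Nat.mul_comm]; exact hN)
      omega
    have hcnt' := hcnt N hNe
    have h2M : (0:ℝ) < 2 * (Mn:ℝ) + 1 := by positivity
    have h2N : (0:ℝ) < 2 * (N:ℝ) + 1 := by positivity
    set c : ℝ := ((FCs Y (-(N:ℤ)) N).card : ℝ) with hc_def
    have hc0 : 0 ≤ c := by rw [hc_def]; positivity
    have hc1 : c ≤ 2 * (N:ℝ) + 1 := by
      rw [hc_def]
      have h := FCs_card_le Y N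
      have h2 : ((FCs Y (-(N:ℤ)) N).card : ℝ) ≤ ((2 * N + 1 : ℕ) : ℝ) := Nat.cast_le.mpr h
      push_cast at h2
      linarith
    have hsumden : ∑ r ∈ s, den (Yr r) (φ N) ≤ c / (2 * (Mn:ℝ) + 1) := by
      rw [hφN]
      have heq : ∑ r ∈ s, den (Yr r) Mn
          = (∑ r ∈ s, ((FCs (Yr r) (-(Mn:ℤ)) Mn).card : ℝ)) / (2 * (Mn:ℝ) + 1) := by
        rw [Finset.sum_div]
        rfl
      rw [heq]
      rw [div_le_div_iff_of_pos_right h2M]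
      rw [hc_def]
      have hcast : (∑ r ∈ s, ((FCs (Yr r) (-(Mn:ℤ)) Mn).card : ℝ))
          = ((∑ r ∈ s, (FCs (Yr r) (-(Mn:ℤ)) Mn).card : ℕ) : ℝ) := by
        push_cast; rfl
      rw [hcast]
      rw [Nat.cast_le]
      rw [hMn_def]
      exact hcnt'
    -- now the arithmetic comparison
    have hnMn : (N:ℝ) ≤ (e:ℝ) * (Mn:ℝ) + 2 * (e:ℝ) - 1 := by
      have h1 : e * (N / e) + N % e = N := Nat.div_add_mod N e
      have h2 : N % e < e := Nat.mod_lt N (by omega)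
      have h3 : N / e = Mn + 1 := by
        have : 1 ≤ N / e := (Nat.one_le_div_iff (by omega)).mpr hNe
        omega
      have h4 : N + 1 ≤ e * Mn + 2 * e := by
        rw [h3, Nat.mul_add, Nat.mul_one] at h1
        linarith
      have h4' : ((N:ℝ)) + 1 ≤ (e:ℝ) * (Mn:ℝ) + 2 * (e:ℝ) := by exact_mod_cast h4
      linarith
    have hδM : 3 * (e:ℝ) ≤ δ * (2 * (Mn:ℝ) + 1) := by
      have hKM : (K:ℝ) ≤ (Mn:ℝ) := by exact_mod_cast hMK
      nlinarith
    have hE1 : (1:ℝ) ≤ (e:ℝ) := by exact_mod_cast he1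
    set q : ℝ := den Y N with hq_def
    have hq0 : 0 ≤ q := den_nonneg Y N
    have hq1 : q ≤ 1 := den_le_one Y N
    have hcq : c = q * (2 * (N:ℝ) + 1) := by
      rw [hq_def]; unfold den; rw [← hc_def, div_mul_cancel₀ _ h2N.ne']
    refine le_trans hsumden ?_
    rw [div_le_iff₀ h2M]
    have hgoal : q * (2 * (N:ℝ) + 1) ≤ ((e:ℝ) * q + δ) * (2 * (Mn:ℝ) + 1) := by
      have h3 : 2 * (N:ℝ) + 1 - 2 * (e:ℝ) * (Mn:ℝ) - (e:ℝ) ≤ 3 * (e:ℝ) - 1 := by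
        nlinarith
      nlinarith [mul_le_of_le_one_left (show (0:ℝ) ≤ 3 * (e:ℝ) - 1 by linarith) hq1,
        mul_nonneg hq0 (le_of_lt h2M)]
    calc c = q * (2 * (N:ℝ) + 1) := hcq
      _ ≤ ((e:ℝ) * q + δ) * (2 * (Mn:ℝ) + 1) := hgoal
      _ = ((e:ℝ) * den Y N + δ) * (2 * (Mn:ℝ) + 1) := by rw [hq_def]
  -- now chain the liminf inequalities
  have hepos : (0:ℝ) < (e:ℝ) := by
    have : (0:ℕ) < e := by omega
    exact_mod_cast this
  calc ∑ r ∈ s, lowerDensity (Yr r)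
      = ∑ r ∈ s, liminf (den (Yr r)) atTop := by
        exact Finset.sum_congr rfl fun r _ => lowerDensity_eq (Yr r)
    _ ≤ ∑ r ∈ s, liminf (fun N => den (Yr r) (φ N)) atTop :=
        Finset.sum_le_sum fun r _ =>
          liminf_le_liminf_comp (den (Yr r)) (den_nonneg _) (den_le_one _) φ hφ_tendsto
    _ ≤ liminf (fun N => ∑ r ∈ s, den (Yr r) (φ N)) atTop :=
        sum_liminf_le s (fun r N => den (Yr r) (φ N))
          (fun r _ N => den_nonneg _ _) (fun r _ N => den_le_one _ _)
    _ ≤ liminf (fun N => (e:ℝ) * den Y N + δ) atTop := by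
        refine liminf_le_liminf hevB
          (isBdd fun N => Finset.sum_nonneg fun r _ => den_nonneg _ _)
          (isCob (c := (e:ℝ) + δ) fun N => ?_)
        have h1 := den_le_one Y N
        have h2 := den_nonneg Y N
        nlinarith
    _ ≤ (e:ℝ) * liminf (den Y) atTop + δ :=
        liminf_affine_le (den Y) (den_nonneg Y) (den_le_one Y) (e:ℝ) δ hepos hδ.le
    _ = (e:ℝ) * lowerDensity Y + δ := by rw [lowerDensity_eq]

end StmtAux

theorem stmt5 (d : ℤ) (hd : 0 < d) (F : Set (Set ℤ)) (hF : F.Finite)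
    (hships : ∀ S ∈ F, S.Finite) :
    piercing ((fun S => (fun x => d * x) '' S) '' F) = piercing F := by
  classical
  set G : Set (Set ℤ) := (fun S => (fun x => d * x) '' S) '' F with hG_def
  set AF : Set (Set ℤ) := {X | ∀ S ∈ F, Hits X S} with hAF_def
  set AG : Set (Set ℤ) := {X | ∀ S ∈ G, Hits X S} with hAG_def
  have hBddF : BddBelow (lowerDensity '' AF) := by
    refine ⟨0, fun y hy => ?_⟩
    obtain ⟨Z, _, rfl⟩ := hy
    exact StmtAux.lowerDensity_nonneg Z
  have hBddG : BddBelow (lowerDensity '' AG) := by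
    refine ⟨0, fun y hy => ?_⟩
    obtain ⟨Z, _, rfl⟩ := hy
    exact StmtAux.lowerDensity_nonneg Z
  by_cases hne : AF.Nonempty
  · have hneG : AG.Nonempty := by
      obtain ⟨X, hX⟩ := hne
      obtain ⟨Y, hY, -⟩ := StmtAux.dirA d hd X
      refine ⟨Y, fun T hT => ?_⟩
      obtain ⟨S, hS, rfl⟩ := hT
      exact hY S (hX S hS)
    unfold piercing
    apply le_antisymm
    · apply le_csInf (hne.image _)
      rintro b ⟨X, hX, rfl⟩
      obtain ⟨Y, hY, hden⟩ := StmtAux.dirA d hd X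
      refine le_trans (csInf_le hBddG ⟨Y, ?_, rfl⟩) hden
      intro T hT
      obtain ⟨S, hS, rfl⟩ := hT
      exact hY S (hX S hS)
    · apply le_csInf (hneG.image _)
      rintro b ⟨Y, hY, rfl⟩
      obtain ⟨Z, hZ, hden⟩ := StmtAux.dirB d hd Y
      refine le_trans (csInf_le hBddF ⟨Z, ?_, rfl⟩) hden
      intro S hS
      exact hZ S (hY _ ⟨S, hS, rfl⟩)
  · have hG_empty : AG = ∅ := by
      rw [Set.eq_empty_iff_forall_notMem]
      intro Y hY
      obtain ⟨Z, hZ, -⟩ := StmtAux.dirB d hd Y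
      apply hne
      refine ⟨Z, fun S hS => ?_⟩
      exact hZ S (hY _ ⟨S, hS, rfl⟩)
    have hF_empty : AF = ∅ := Set.not_nonempty_iff_eq_empty.mp hne
    unfold piercing
    rw [← hAF_def, ← hAG_def, hG_empty, hF_empty]
end

section
/- For any positive integers a_1 < a_2 < ... < a_n and F = {{0,a_1}, ..., {0,a_n}}, we have π(F) ≤ n/(n+1). Consequently M = sup over families of n 2-ships of π equals n/(n+1). -/
open Filter Topology
attribute [local instance] Classical.propDecidable

def greedy {n : ℕ} (B : Fin n → ℕ) (t : ℕ) : Prop :=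
  ∀ s, s < t → greedy B s → ∀ i, s + B i ≠ t
termination_by t

lemma greedy_def {n : ℕ} (B : Fin n → ℕ) (t : ℕ) :
    greedy B t ↔ ∀ s, s < t → greedy B s → ∀ i, s + B i ≠ t := by
  rw [greedy]

lemma greedy_add {n : ℕ} {B : Fin n → ℕ} {t : ℕ} (h : greedy B t) (i : Fin n) (hi : 0 < B i) :
    ¬ greedy B (t + B i) := fun hg => (greedy_def B _).mp hg t (by omega) h i rfl

lemma exists_of_not_greedy {n : ℕ} {B : Fin n → ℕ} {t : ℕ} (h : ¬ greedy B t) :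
    ∃ s, s < t ∧ greedy B s ∧ ∃ i, s + B i = t := by
  rw [greedy_def] at h
  push_neg at h
  obtain ⟨s, hs, hgs, i, hi⟩ := h
  exact ⟨s, hs, hgs, i, hi⟩

lemma greedy_count {n : ℕ} (B : Fin n → ℕ) (N : ℕ) :
    N + 1 ≤ (n+1) * ((Finset.range (N+1)).filter (fun t => greedy B t)).card := by
  classical
  set G := (Finset.range (N+1)).filter (fun t => greedy B t) with hG
  have hsub : (Finset.range (N+1)).filter (fun t => ¬ greedy B t) ⊆
      (G ×ˢ (Finset.univ : Finset (Fin n))).image (fun p => p.1 + B p.2) := by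
    intro t ht
    simp only [Finset.mem_filter, Finset.mem_range] at ht
    obtain ⟨s, hs, hgs, i, hsi⟩ := exists_of_not_greedy ht.2
    refine Finset.mem_image.mpr ⟨⟨s, i⟩, ?_, hsi⟩
    simp only [Finset.mem_product, Finset.mem_univ, and_true, hG, Finset.mem_filter,
      Finset.mem_range]
    exact ⟨by omega, hgs⟩
  have h1 : ((Finset.range (N+1)).filter (fun t => ¬ greedy B t)).card ≤ G.card * n :=
    calc _ ≤ ((G ×ˢ (Finset.univ : Finset (Fin n))).image (fun p => p.1 + B p.2)).card :=
        Finset.card_le_card hsub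
    _ ≤ (G ×ˢ (Finset.univ : Finset (Fin n))).card := Finset.card_image_le
    _ = G.card * n := by simp [Finset.card_product]
  have h2 : G.card + ((Finset.range (N+1)).filter (fun t => ¬ greedy B t)).card = N+1 := by
    rw [hG, Finset.card_filter_add_card_filter_not]
    simp
  calc N + 1 = G.card + ((Finset.range (N+1)).filter (fun t => ¬ greedy B t)).card := h2.symm
  _ ≤ G.card + G.card * n := by omega
  _ = (n+1) * G.card := by ring

lemma ncard_inter_coe (X : Set ℤ) (s : Finset ℤ) :
    (X ∩ ↑s).ncard = (s.filter (· ∈ X)).card := by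
  rw [← Set.ncard_coe_finset (s.filter (· ∈ X))]
  congr 1
  ext x
  simp [and_comm]

noncomputable def dseq (X : Set ℤ) (N : ℕ) : ℝ :=
    ((X ∩ Set.Icc (-(N:ℤ)) (N:ℤ)).ncard : ℝ) / (2 * N + 1)

lemma dseq_nonneg (X : Set ℤ) (N : ℕ) : 0 ≤ dseq X N := by
  apply div_nonneg (by positivity) (by positivity)

lemma dseq_le_one (X : Set ℤ) (N : ℕ) : dseq X N ≤ 1 := by
  rw [dseq, div_le_one (by positivity)]
  have h1 : (X ∩ Set.Icc (-(N:ℤ)) (N:ℤ)).ncard ≤ (Set.Icc (-(N:ℤ)) (N:ℤ)).ncard :=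
    Set.ncard_le_ncard Set.inter_subset_right (Set.finite_Icc _ _)
  have h2 : (Set.Icc (-(N:ℤ)) (N:ℤ)).ncard = 2 * N + 1 := by
    rw [← Finset.coe_Icc, Set.ncard_coe_finset, Int.card_Icc]
    omega
  have : (X ∩ Set.Icc (-(N:ℤ)) (N:ℤ)).ncard ≤ 2 * N + 1 := h2 ▸ h1
  calc ((X ∩ Set.Icc (-(N:ℤ)) (N:ℤ)).ncard : ℝ) ≤ ((2 * N + 1 : ℕ) : ℝ) := by exact_mod_cast this
  _ = 2 * N + 1 := by push_cast; ring

lemma lowerDensity_eq (X : Set ℤ) : lowerDensity X = liminf (dseq X) atTop := rfl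

lemma lowerDensity_nonneg (X : Set ℤ) : 0 ≤ lowerDensity X := by
  rw [lowerDensity_eq]
  have := Filter.liminf_le_liminf (f := atTop) (u := fun _ : ℕ => (0:ℝ)) (v := dseq X)
    (Eventually.of_forall (fun N => dseq_nonneg X N))
    (isBoundedUnder_of ⟨0, fun N => le_refl (0:ℝ)⟩)
    (IsBoundedUnder.isCoboundedUnder_ge (isBoundedUnder_of ⟨1, fun N => dseq_le_one X N⟩))
  simpa using this

lemma lowerDensity_le_of_tendsto (X : Set ℤ) (g : ℕ → ℝ) {L : ℝ}
    (hg : Tendsto g atTop (nhds L))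
    (h : ∀ᶠ N in atTop, dseq X N ≤ g N) :
    lowerDensity X ≤ L := by
  rw [lowerDensity_eq, ← hg.liminf_eq]
  refine Filter.liminf_le_liminf h ?_ ?_
  · exact isBoundedUnder_of ⟨0, fun N => dseq_nonneg X N⟩
  · exact hg.isCoboundedUnder_ge

lemma le_lowerDensity_of_tendsto (X : Set ℤ) (g : ℕ → ℝ) {L : ℝ}
    (hg : Tendsto g atTop (nhds L))
    (h : ∀ᶠ N in atTop, g N ≤ dseq X N) :
    L ≤ lowerDensity X := by
  rw [lowerDensity_eq, ← hg.liminf_eq]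
  refine Filter.liminf_le_liminf h ?_ ?_
  · exact hg.isBoundedUnder_ge
  · exact IsBoundedUnder.isCoboundedUnder_ge (isBoundedUnder_of ⟨1, fun N => dseq_le_one X N⟩)

lemma tendsto_ratio (c : ℝ) : Tendsto (fun N : ℕ => (2*(N:ℝ)+2-c)/(2*N+1)) atTop (𝓝 1) := by
  have hden : Tendsto (fun N : ℕ => 2*(N:ℝ)+1) atTop atTop := by
    apply tendsto_atTop_add_const_right
    exact (tendsto_natCast_atTop_atTop (R := ℝ)).const_mul_atTop two_pos
  have h0 : Tendsto (fun N : ℕ => (1-c)/(2*(N:ℝ)+1)) atTop (𝓝 0) :=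
    Tendsto.div_atTop tendsto_const_nhds hden
  have h2 : Tendsto (fun N : ℕ => 1 + (1-c)/(2*(N:ℝ)+1)) atTop (𝓝 1) := by
    simpa using tendsto_const_nhds.add h0
  refine h2.congr (fun N => ?_)
  have hpos : (0:ℝ) < 2*(N:ℝ)+1 := by positivity
  field_simp
  ring

lemma exists_hitter {n : ℕ} (b : Fin n → ℤ) (hb : ∀ i, 0 < b i) :
    ∃ X : Set ℤ, (∀ i, Hits X {0, b i}) ∧ lowerDensity X ≤ n / (n+1) := by
  set B : Fin n → ℕ := fun i => (b i).toNat with hBdef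
  set c : ℕ := Finset.univ.sup B + 1 with hcdef
  set Y : Set ℤ := {m | (0 ≤ m ∧ greedy B m.toNat) ∨ (m + c ≤ 0 ∧ greedy B (-(m+c)).toNat)}
    with hYdef
  have hBi : ∀ i, (B i : ℤ) = b i := fun i => Int.toNat_of_nonneg (le_of_lt (hb i))
  have hBpos : ∀ i, 0 < B i := by intro i; have := hBi i; have := hb i; omega
  have hBc : ∀ i, B i < c := by
    intro i
    have := Finset.le_sup (f := B) (Finset.mem_univ i)
    omega
  have key : ∀ (t : ℤ) (i : Fin n), t ∈ Y → t + b i ∉ Y := by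
    intro t i ht hti
    have h1 := hBi i
    have h2 := hBc i
    have h3 := hBpos i
    rcases ht with ⟨ht1, ht2⟩ | ⟨ht1, ht2⟩ <;> rcases hti with ⟨hti1, hti2⟩ | ⟨hti1, hti2⟩
    · have he : (t + b i).toNat = t.toNat + B i := by omega
      rw [he] at hti2
      exact greedy_add ht2 i h3 hti2
    · omega
    · omega
    · have he : (-(t + c)).toNat = (-(t + b i + c)).toNat + B i := by omega
      rw [he] at ht2
      exact greedy_add hti2 i h3 ht2
  refine ⟨Yᶜ, fun i t => ?_, ?_⟩
  · by_cases h : t ∈ Y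
    · exact ⟨b i, by simp, key t i h⟩
    · exact ⟨0, by simp, by simpa using h⟩
  -- density estimate
  set K : ℕ → ℕ := fun M => ((Finset.range (M+1)).filter (fun t => greedy B t)).card with hKdef
  have hcount : ∀ N : ℕ, c ≤ N →
      K N + K (N - c) ≤ ((Finset.Icc (-(N:ℤ)) N).filter (· ∈ Y)).card := by
    intro N hcN
    set S1 : Finset ℤ := ((Finset.range (N+1)).filter (fun t => greedy B t)).image
      (fun t : ℕ => (t : ℤ)) with hS1
    set S2 : Finset ℤ := ((Finset.range (N-c+1)).filter (fun t => greedy B t)).image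
      (fun t : ℕ => -(t:ℤ) - c) with hS2
    have hS1sub : S1 ⊆ (Finset.Icc (-(N:ℤ)) N).filter (· ∈ Y) := by
      intro m hm
      obtain ⟨t, htm, rfl⟩ := Finset.mem_image.mp hm
      simp only [Finset.mem_filter, Finset.mem_range] at htm
      simp only [Finset.mem_filter, Finset.mem_Icc]
      refine ⟨⟨by omega, by omega⟩, Or.inl ⟨by positivity, ?_⟩⟩
      simpa using htm.2
    have hS2sub : S2 ⊆ (Finset.Icc (-(N:ℤ)) N).filter (· ∈ Y) := by
      intro m hm
      obtain ⟨t, htm, rfl⟩ := Finset.mem_image.mp hm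
      simp only [Finset.mem_filter, Finset.mem_range] at htm
      simp only [Finset.mem_filter, Finset.mem_Icc]
      refine ⟨⟨by omega, by omega⟩, Or.inr ⟨by omega, ?_⟩⟩
      have he : (-(-(t:ℤ) - c + c)).toNat = t := by omega
      rw [he]
      exact htm.2
    have hdisj : Disjoint S1 S2 := by
      rw [Finset.disjoint_left]
      intro m hm1 hm2
      obtain ⟨t, _, rfl⟩ := Finset.mem_image.mp hm1
      obtain ⟨s, _, he⟩ := Finset.mem_image.mp hm2
      omega
    have hc1 : S1.card = K N := by
      rw [hS1, Finset.card_image_of_injective _ (fun x y h => by omega)]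
    have hc2 : S2.card = K (N - c) := by
      rw [hS2, Finset.card_image_of_injective _ (fun x y h => by omega)]
    calc K N + K (N - c) = S1.card + S2.card := by rw [hc1, hc2]
    _ = (S1 ∪ S2).card := (Finset.card_union_of_disjoint hdisj).symm
    _ ≤ _ := Finset.card_le_card (Finset.union_subset hS1sub hS2sub)
  set g : ℕ → ℝ := fun N => 1 - (1/((n:ℝ)+1)) * ((2*N+2-c)/(2*N+1)) with hgdef
  have hg : Tendsto g atTop (𝓝 ((n:ℝ)/(n+1))) := by
    have := (tendsto_const_nhds (x := (1:ℝ)) (f := atTop (α := ℕ))).sub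
      ((tendsto_const_nhds (x := 1/((n:ℝ)+1))).mul (tendsto_ratio (c:ℝ)))
    have he : (1:ℝ) - 1/((n:ℝ)+1) * 1 = (n:ℝ)/(n+1) := by
      have : ((n:ℝ)+1) ≠ 0 := by positivity
      field_simp
      ring
    rw [he] at this
    exact this
  refine lowerDensity_le_of_tendsto _ g hg ?_
  filter_upwards [eventually_ge_atTop c] with N hcN
  have hpos : (0:ℝ) < 2*(N:ℝ)+1 := by positivity
  have hnpos : (0:ℝ) < (n:ℝ)+1 := by positivity
  rw [dseq, ← Finset.coe_Icc, ncard_inter_coe, div_le_iff₀ hpos]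
  have hsplit : ((Finset.Icc (-(N:ℤ)) N).filter (· ∈ Yᶜ)).card
      + ((Finset.Icc (-(N:ℤ)) N).filter (· ∈ Y)).card = 2*N+1 := by
    have := Finset.card_filter_add_card_filter_not (s := Finset.Icc (-(N:ℤ)) N)
      (p := (· ∈ Y))
    have hcard : (Finset.Icc (-(N:ℤ)) N).card = 2*N+1 := by
      rw [Int.card_Icc]; omega
    have hcompl : ((Finset.Icc (-(N:ℤ)) N).filter (· ∈ Yᶜ)).card
        = ((Finset.Icc (-(N:ℤ)) N).filter (fun m => ¬ (m ∈ Y))).card := by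
      congr 1
    omega
  have hK1 : (N:ℝ) + 1 ≤ ((n:ℝ)+1) * K N := by exact_mod_cast greedy_count B N
  have hK2 : ((N:ℝ) - c) + 1 ≤ ((n:ℝ)+1) * K (N - c) := by
    have := greedy_count B (N - c)
    have hcast : ((N - c : ℕ) : ℝ) = (N:ℝ) - c := by
      have : ((N - c : ℕ) : ℤ) = (N:ℤ) - c := by omega
      exact_mod_cast this
    calc ((N:ℝ) - c) + 1 = ((N - c : ℕ) : ℝ) + 1 := by rw [hcast]
    _ ≤ ((n:ℝ)+1) * K (N - c) := by exact_mod_cast this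
  have hcy := hcount N hcN
  have hcyR : (K N : ℝ) + K (N - c) ≤ ((Finset.Icc (-(N:ℤ)) N).filter (· ∈ Y)).card := by
    exact_mod_cast hcy
  have hsplitR : (((Finset.Icc (-(N:ℤ)) N).filter (· ∈ Yᶜ)).card : ℝ)
      + ((Finset.Icc (-(N:ℤ)) N).filter (· ∈ Y)).card = 2*(N:ℝ)+1 := by
    exact_mod_cast hsplit
  have hgmul : g N * (2*(N:ℝ)+1) = (2*(N:ℝ)+1) - (1/((n:ℝ)+1)) * (2*(N:ℝ)+2-c) := by
    rw [hgdef]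
    field_simp
  have hd : (1/((n:ℝ)+1)) * (2*(N:ℝ)+2-c) ≤ (K N : ℝ) + K (N - c) := by
    rw [one_div, inv_mul_le_iff₀ hnpos]
    nlinarith [hK1, hK2]
  rw [hgmul]
  have hfin : (((Finset.Icc (-(N:ℤ)) N).filter (· ∈ Yᶜ)).card : ℝ) ≤ 2*(N:ℝ)+1 - (1/((n:ℝ)+1)) * (2*(N:ℝ)+2-(c:ℝ)) := by linarith
  convert hfin using 4
  rfl

lemma lower_bound {n : ℕ} (X : Set ℤ)
    (hX : ∀ k : ℤ, 1 ≤ k → k ≤ n → Hits X {0, k}) :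
    (n:ℝ)/(n+1) ≤ lowerDensity X := by
  set Y : Set ℤ := Xᶜ with hYdef
  have sep : ∀ y z : ℤ, y ∈ Y → z ∈ Y → y < z → y + n < z := by
    intro y z hy hz hlt
    by_contra h
    push_neg at h
    obtain ⟨s, hs, hmem⟩ := hX (z - y) (by omega) (by omega) y
    rcases hs with rfl | rfl
    · simp only [add_zero] at hmem; exact hy hmem
    · rw [add_sub_cancel] at hmem; exact hz hmem
  have hnpos : (0:ℝ) < (n:ℝ)+1 := by positivity
  have hnposZ : (0:ℤ) < (n:ℤ)+1 := by positivity
  have count : ∀ N : ℕ, (((Finset.Icc (-(N:ℤ)) N).filter (· ∈ Y)).card : ℝ)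
      ≤ 2*(N:ℝ)/((n:ℝ)+1) + 1 := by
    intro N
    set q : ℤ := (2*(N:ℤ))/((n:ℤ)+1) with hq
    have hcard : ((Finset.Icc (-(N:ℤ)) N).filter (· ∈ Y)).card ≤ (Finset.Icc (0:ℤ) q).card := by
      apply Finset.card_le_card_of_injOn (fun y => (y + N)/((n:ℤ)+1))
      · intro y hy
        simp only [Finset.mem_coe, Finset.mem_filter, Finset.mem_Icc] at hy
        simp only [Finset.mem_coe, Finset.mem_Icc]
        constructor
        · exact Int.ediv_nonneg (by omega) (by omega)
        · exact Int.ediv_le_ediv hnposZ (by omega)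
      · intro y hy z hz hyz
        simp only [Finset.coe_filter, Set.mem_setOf_eq, Finset.mem_Icc] at hy hz
        by_contra hne
        have e1 := Int.mul_ediv_add_emod (y + N) ((n:ℤ)+1)
        have e2 := Int.mul_ediv_add_emod (z + N) ((n:ℤ)+1)
        have m1 := Int.emod_nonneg (y + N) (by omega : ((n:ℤ)+1) ≠ 0)
        have m2 := Int.emod_nonneg (z + N) (by omega : ((n:ℤ)+1) ≠ 0)
        have m1' := Int.emod_lt_of_pos (y + N) hnposZ
        have m2' := Int.emod_lt_of_pos (z + N) hnposZ
        have hyz' : (y + (N:ℤ))/((n:ℤ)+1) = (z + (N:ℤ))/((n:ℤ)+1) := hyz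
        rw [hyz'] at e1
        have hdiff : y - z = (y + N) % ((n:ℤ)+1) - (z + N) % ((n:ℤ)+1) := by linarith
        rcases lt_or_gt_of_ne hne with h | h
        · have := sep y z hy.2 hz.2 h; omega
        · have := sep z y hz.2 hy.2 h; omega
      
    have hqb : (q:ℝ) ≤ 2*(N:ℝ)/((n:ℝ)+1) := by
      rw [le_div_iff₀ hnpos]
      have h1 : ((n:ℤ)+1) * q ≤ 2*(N:ℤ) := by
        have e3 := Int.mul_ediv_add_emod (2*(N:ℤ)) ((n:ℤ)+1)
        have e4 := Int.emod_nonneg (2*(N:ℤ)) (by omega : ((n:ℤ)+1) ≠ 0)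
        rw [hq]
        linarith
      calc (q:ℝ) * ((n:ℝ)+1) = (((n:ℤ)+1) * q : ℤ) := by push_cast; ring
      _ ≤ ((2*(N:ℤ) : ℤ) : ℝ) := by exact_mod_cast h1
      _ = 2*(N:ℝ) := by push_cast; ring
    have hq0 : 0 ≤ q := Int.ediv_nonneg (by positivity) (by omega)
    have hIcc : ((Finset.Icc (0:ℤ) q).card : ℝ) = (q:ℝ) + 1 := by
      rw [Int.card_Icc]
      have : (q + 1 - 0).toNat = (q+1).toNat := by omega
      rw [this]
      have : ((q+1).toNat : ℤ) = q + 1 := by omega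
      calc (((q+1).toNat : ℕ) : ℝ) = (((q+1).toNat : ℤ) : ℝ) := by push_cast; ring
      _ = (q:ℝ) + 1 := by rw [this]; push_cast; ring
    calc (((Finset.Icc (-(N:ℤ)) N).filter (· ∈ Y)).card : ℝ) ≤ ((Finset.Icc (0:ℤ) q).card : ℝ) := by
          exact_mod_cast hcard
    _ = (q:ℝ) + 1 := hIcc
    _ ≤ 2*(N:ℝ)/((n:ℝ)+1) + 1 := by linarith
  set g : ℕ → ℝ := fun N => ((n:ℝ)/(n+1)) * ((2*N+2-2)/(2*N+1)) with hgdef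
  have hg : Tendsto g atTop (𝓝 ((n:ℝ)/(n+1))) := by
    have h := (tendsto_const_nhds (x := (n:ℝ)/((n:ℝ)+1)) (f := atTop (α := ℕ))).mul
      (tendsto_ratio 2)
    rw [mul_one] at h
    exact h
  refine le_lowerDensity_of_tendsto _ g hg ?_
  filter_upwards with N
  have hpos : (0:ℝ) < 2*(N:ℝ)+1 := by positivity
  rw [dseq, ← Finset.coe_Icc, ncard_inter_coe, le_div_iff₀ hpos]
  have hsplit : ((Finset.Icc (-(N:ℤ)) N).filter (· ∈ X)).card
      + ((Finset.Icc (-(N:ℤ)) N).filter (· ∈ Y)).card = 2*N+1 := by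
    have := Finset.card_filter_add_card_filter_not (s := Finset.Icc (-(N:ℤ)) N)
      (p := (· ∈ X))
    have hcard : (Finset.Icc (-(N:ℤ)) N).card = 2*N+1 := by
      rw [Int.card_Icc]; omega
    have hcompl : ((Finset.Icc (-(N:ℤ)) N).filter (· ∈ Y)).card
        = ((Finset.Icc (-(N:ℤ)) N).filter (fun m => ¬ (m ∈ X))).card := by
      congr 1
    omega
  have hsplitR : (((Finset.Icc (-(N:ℤ)) N).filter (· ∈ X)).card : ℝ)
      + ((Finset.Icc (-(N:ℤ)) N).filter (· ∈ Y)).card = 2*(N:ℝ)+1 := by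
    exact_mod_cast hsplit
  have hgm : g N * (2*(N:ℝ)+1) = 2*(N:ℝ) - 2*(N:ℝ)/((n:ℝ)+1) := by
    rw [hgdef]
    field_simp
    ring
  rw [hgm]
  have hcY := count N
  have hfin : 2*(N:ℝ) - 2*(N:ℝ)/((n:ℝ)+1)
      ≤ (((Finset.Icc (-(N:ℤ)) N).filter (· ∈ X)).card : ℝ) := by linarith
  convert hfin using 4

lemma piercing_le {F : Set (Set ℤ)} {X : Set ℤ} (hX : ∀ S ∈ F, Hits X S) :
    piercing F ≤ lowerDensity X := by
  apply csInf_le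
  · exact ⟨0, by rintro y ⟨Z, _, rfl⟩; exact lowerDensity_nonneg Z⟩
  · exact Set.mem_image_of_mem _ hX

lemma le_piercing {F : Set (Set ℤ)} {L : ℝ} (hne : ∀ S ∈ F, Hits Set.univ S)
    (h : ∀ X : Set ℤ, (∀ S ∈ F, Hits X S) → L ≤ lowerDensity X) :
    L ≤ piercing F := by
  apply le_csInf
  · exact ⟨lowerDensity Set.univ, Set.univ, hne, rfl⟩
  · rintro y ⟨Z, hZ, rfl⟩
    exact h Z hZ

lemma hits_pair (X : Set ℤ) (c d : ℤ) (h : Hits X {0, d}) : Hits X {c, c + d} := by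
  intro m
  obtain ⟨s, hs, hmem⟩ := h (m + c)
  simp only [Set.mem_insert_iff, Set.mem_singleton_iff] at hs
  rcases hs with rfl | rfl
  · exact ⟨c, Set.mem_insert _ _, by simpa using hmem⟩
  · exact ⟨c + s, Set.mem_insert_of_mem _ rfl, by rw [← add_assoc]; exact hmem⟩

lemma ub_family {n : ℕ} (hn : 0 < n) (T : Fin n → Set ℤ) (hT2 : ∀ i, (T i).ncard = 2) :
    piercing {S | ∃ i, S = T i} ≤ (n:ℝ) / (n + 1) := by
  have hex : ∀ i, ∃ u v : ℤ, u ≠ v ∧ T i = {u, v} := fun i => Set.ncard_eq_two.mp (hT2 i)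
  choose u v huv hT using hex
  set b : Fin n → ℤ := fun i => |v i - u i| with hb
  have hbpos : ∀ i, 0 < b i := fun i => abs_pos.mpr (sub_ne_zero.mpr (huv i).symm)
  obtain ⟨X, hX, hXd⟩ := exists_hitter b hbpos
  refine le_trans (piercing_le ?_) hXd
  rintro S ⟨i, rfl⟩
  rw [hT i]
  rcases lt_or_gt_of_ne (huv i) with h | h
  · have he : v i = u i + b i := by
      rw [hb]; simp only
      rw [abs_of_pos (by omega : (0:ℤ) < v i - u i)]
      ring
    rw [he]
    exact hits_pair X (u i) (b i) (hX i)
  · have he : u i = v i + b i := by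
      rw [hb]; simp only
      rw [abs_of_neg (by omega : v i - u i < 0)]
      ring
    rw [Set.pair_comm, he]
    exact hits_pair X (v i) (b i) (hX i)

theorem stmt7 (n : ℕ) (hn : 0 < n) (a : Fin n → ℤ) (hpos : ∀ i, 0 < a i)
    (hmono : StrictMono a) :
    piercing {S : Set ℤ | ∃ i, S = ({0, a i} : Set ℤ)} ≤ n / (n + 1) ∧
    IsLUB {x : ℝ | ∃ T : Fin n → Set ℤ, (∀ i, (T i).ncard = 2) ∧
      x = piercing {S | ∃ i, S = T i}} ((n : ℝ) / (n + 1)) := by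
  constructor
  · obtain ⟨X, hX, hXd⟩ := exists_hitter a hpos
    refine le_trans (piercing_le ?_) hXd
    rintro S ⟨i, rfl⟩
    exact hX i
  · set T0 : Fin n → Set ℤ := fun i => ({0, (i:ℤ)+1} : Set ℤ) with hT0
    have hT0card : ∀ i, (T0 i).ncard = 2 := by
      intro i
      apply Set.ncard_pair
      have : (0:ℤ) ≤ (i:ℤ) := by positivity
      omega
    have hub : piercing {S | ∃ i, S = T0 i} ≤ (n:ℝ)/(n+1) := ub_family hn T0 hT0card
    have hlb : (n:ℝ)/(n+1) ≤ piercing {S | ∃ i, S = T0 i} := by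
      apply le_piercing
      · rintro S ⟨i, rfl⟩
        exact fun m => ⟨0, Set.mem_insert _ _, trivial⟩
      · intro X hXs
        apply lower_bound
        intro k hk1 hkn
        have hidx : k.toNat - 1 < n := by omega
        have hX : Hits X {0, ((k.toNat - 1 : ℕ) : ℤ) + 1} :=
          hXs (T0 ⟨k.toNat - 1, hidx⟩) ⟨⟨k.toNat - 1, hidx⟩, rfl⟩
        have he : ((k.toNat - 1 : ℕ) : ℤ) + 1 = k := by omega
        rw [he] at hX
        exact hX
    have heq : piercing {S | ∃ i, S = T0 i} = (n:ℝ)/(n+1) := le_antisymm hub hlb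
    constructor
    · rintro x ⟨T, hT2, rfl⟩
      exact ub_family hn T hT2
    · intro y hy
      exact hy ⟨T0, hT0card, heq.symm⟩
end
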